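/- The topological space T(W_R) of typical vertices of the Rademacher graphon W_R is not locally compact; in particular, it is not compact. -/

import Mathlib

open MeasureTheory Set
open scoped Classical

noncomputable section

/-- For `z ∈ [0,1)`, `brk z` is the smallest `k` with `z + 2^{-k} < 1`. -/
def brk (z : ℝ) : ℕ := sInf {k : ℕ | z + (1/2 : ℝ) ^ k < 1}

/-- The eight parts of the Rademacher graphon, as subintervals of `[0,1]`;
all have length `1/9` except `pC`, of length `2/9`. -/
def pA : Set ℝ := Ico 0 (1/9)
def pA' : Set ℝ := Ico (1/9) (2/9)
def pB : Set ℝ := Ico (2/9) (3/9)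
def pB' : Set ℝ := Ico (3/9) (4/9)
def pB'' : Set ℝ := Ico (4/9) (5/9)
def pC : Set ℝ := Ico (5/9) (7/9)
def pC' : Set ℝ := Ico (7/9) (8/9)
def pD : Set ℝ := Ico (8/9) 1

/-- One-sided description of the Rademacher graphon; coordinates inside each part are
relative positions (`9*x - …`, and `(9*x-5)/2` inside `pC`). -/
def WRo (x y : ℝ) : ℝ :=
  if x ∈ pA ∧ y ∈ pA then (if brk (9*x) ≠ brk (9*y) then 1 else 0)
  else if x ∈ pA' ∧ y ∈ pA' then (if brk (9*x-1) ≠ brk (9*y-1) then 1 else 0)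
  else if x ∈ pA ∧ y ∈ pA' then (if brk (9*x) = brk (9*y-1) then 1 else 0)
  else if x ∈ pA ∧ y ∈ pB then (if 9*x + (9*y-2) ≤ 1 then 1 else 0)
  else if x ∈ pA ∧ y ∈ pB'' then (if 1 ≤ 9*x + (9*y-4) then 1 else 0)
  else if x ∈ pA' ∧ y ∈ pB' then (if (9*x-1) + (9*y-3) ≤ 1 then 1 else 0)
  else if x ∈ pA' ∧ y ∈ pB'' then (if 9*y-4 ≤ 9*x-1 then 1 else 0)
  else if x ∈ pB ∧ y ∈ pB then (if 1 ≤ (9*x-2) + (9*y-2) then 1 else 0)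
  else if x ∈ pB' ∧ y ∈ pB' then (if 1 ≤ (9*x-3) + (9*y-3) then 1 else 0)
  else if x ∈ pA ∧ y ∈ pC then
    (if Even ⌊(9*y-5)/2 * (2:ℝ) ^ brk (9*x)⌋ then 1 else 0)
  else if x ∈ pA' ∧ y ∈ pC' then
    (if (1 - (1/2:ℝ) ^ brk (9*x-1) - (9*x-1)) * (2:ℝ) ^ brk (9*x-1) + (9*y-7) ≤ 1
      then 1 else 0)
  else if x ∈ pC' ∧ y ∈ pC' then (if 1 ≤ (9*x-7) + (9*y-7) then 1 else 0)
  else if x ∈ pA' ∧ y ∈ pC then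
    (if Even ⌊(9*y-5)/2 * (2:ℝ) ^ brk (9*x-1)⌋
      then (1 - (1/2:ℝ) ^ brk (9*x-1) - (9*x-1)) * (2:ℝ) ^ brk (9*x-1) else 0)
  else if x ∈ pC ∧ y ∈ pC then (if 1 ≤ (9*x-5)/2 + (9*y-5)/2 then 3/4 else 0)
  else if (x ∈ pA' ∨ x ∈ pB') ∧ y ∈ pD then 0.2
  else if x ∈ pB'' ∧ y ∈ pD then 0.4
  else if x ∈ pC' ∧ y ∈ pD then 0.8
  else 0

/-- The Rademacher graphon `W_R` (symmetrization of `WRo`; for each pair at most one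
order matches a case, and all values are nonnegative). -/
def WR (x y : ℝ) : ℝ := max (WRo x y) (WRo y x)

end
noncomputable section

/-- Lebesgue measure restricted to `[0,1]`. -/
def μ01 : Measure ℝ := volume.restrict (Set.Icc 0 1)

/-- The space `T(W)` of typical vertices of a graphon `W`, as a subset of `L¹[0,1]`:
those `f ∈ L¹[0,1]` such that every open neighborhood `U` of `f` satisfies
`|{x ∈ [0,1] : f^W_x ∈ U}| > 0`, where `f^W_x = W(x,·)`. -/
def Tspace (W : ℝ → ℝ → ℝ) : Set (Lp ℝ 1 μ01) :=
  {f | ∀ U : Set (Lp ℝ 1 μ01), IsOpen U → f ∈ U →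
    0 < volume {x | x ∈ Set.Icc (0:ℝ) 1 ∧
      ∃ g ∈ U, ∀ᵐ y ∂μ01, g y = W x y}}

end


noncomputable section Rad
namespace RadProof

lemma half_pow_pos (i : ℕ) : 0 < (1/2:ℝ)^i := by positivity
lemma two_pow_pos (i : ℕ) : 0 < (2:ℝ)^i := by positivity
lemma half_pow_le_half {i : ℕ} (hi : 1 ≤ i) : (1/2:ℝ)^i ≤ 1/2 := by
  calc (1/2:ℝ)^i ≤ (1/2:ℝ)^1 := pow_le_pow_of_le_one (by norm_num) (by norm_num) hi
  _ = 1/2 := pow_one _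
lemma half_mul_two (i : ℕ) : (1/2:ℝ)^i * 2^i = 1 := by
  rw [← mul_pow]; norm_num

def blkL (i : ℕ) : ℝ := 1 - 2*(1/2:ℝ)^i
def blkR (i : ℕ) : ℝ := 1 - (1/2:ℝ)^i

lemma blkL_nonneg {i : ℕ} (hi : 1 ≤ i) : 0 ≤ blkL i := by
  have := half_pow_le_half hi; unfold blkL; linarith
lemma blkL_lt_blkR (i : ℕ) : blkL i < blkR i := by
  have := half_pow_pos i; unfold blkL blkR; linarith
lemma blkR_lt_one (i : ℕ) : blkR i < 1 := by
  have := half_pow_pos i; unfold blkR; linarith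

lemma brk_eq {i : ℕ} (hi : 1 ≤ i) {t : ℝ} (h1 : blkL i ≤ t) (h2 : t < blkR i) : brk t = i := by
  have hmem : i ∈ {k : ℕ | t + (1/2:ℝ)^k < 1} := by
    have : t + (1/2:ℝ)^i < 1 := by unfold blkR at h2; linarith
    exact this
  unfold brk
  refine le_antisymm (Nat.sInf_le hmem) (le_csInf ⟨i, hmem⟩ ?_)
  intro k hk
  by_contra hlt
  push_neg at hlt
  obtain ⟨j, rfl⟩ : ∃ j, i = j + 1 := ⟨i-1, by omega⟩
  have hkj : k ≤ j := by omega
  have hle : (1/2:ℝ)^j ≤ (1/2:ℝ)^k := pow_le_pow_of_le_one (by norm_num) (by norm_num) hkj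
  have hk' : t + (1/2:ℝ)^k < 1 := hk
  have h2j : 2*(1/2:ℝ)^(j+1) = (1/2:ℝ)^j := by ring
  unfold blkL at h1; linarith

lemma brk_mem {t : ℝ} (h0 : 0 ≤ t) (h1 : t < 1) :
    1 ≤ brk t ∧ blkL (brk t) ≤ t ∧ t < blkR (brk t) := by
  have hne : {k : ℕ | t + (1/2:ℝ)^k < 1}.Nonempty := by
    obtain ⟨n, hn⟩ := exists_pow_lt_of_lt_one (show (0:ℝ) < 1 - t by linarith)
      (show (1/2:ℝ) < 1 by norm_num)
    exact ⟨n, show t + (1/2:ℝ)^n < 1 by linarith⟩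
  have hmem : brk t ∈ {k : ℕ | t + (1/2:ℝ)^k < 1} := Nat.sInf_mem hne
  have hmem' : t + (1/2:ℝ)^(brk t) < 1 := hmem
  have h2 : t < blkR (brk t) := by unfold blkR; linarith
  have hb1 : 1 ≤ brk t := by
    rcases Nat.eq_zero_or_pos (brk t) with h | h
    · exfalso; rw [h] at hmem'; norm_num at hmem'; linarith
    · exact h
  refine ⟨hb1, ?_, h2⟩
  by_contra hlt
  push_neg at hlt
  obtain ⟨j, hj⟩ : ∃ j, brk t = j + 1 := ⟨brk t - 1, by omega⟩
  have hmemj : j ∈ {k : ℕ | t + (1/2:ℝ)^k < 1} := by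
    have h2j : 2*(1/2:ℝ)^(j+1) = (1/2:ℝ)^j := by ring
    unfold blkL at hlt; rw [hj] at hlt
    show t + (1/2:ℝ)^j < 1
    linarith
  have := Nat.sInf_le hmemj
  unfold brk at this hj
  omega

end RadProof
end Rad

noncomputable section Rad2
namespace RadProof
open MeasureTheory Set

def bA (i : ℕ) : Set ℝ := Ico (blkL i / 9) (blkR i / 9)
def bA' (i : ℕ) : Set ℝ := Ico ((1 + blkL i) / 9) ((1 + blkR i) / 9)
def rad (i : ℕ) : Set ℝ := {y | y ∈ pC ∧ Even ⌊(9*y-5)/2 * (2:ℝ)^i⌋}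
def cpar (i : ℕ) (t : ℝ) : ℝ := (1 - (1/2:ℝ)^i - t) * 2^i

def φ (i : ℕ) (t : ℝ) : ℝ → ℝ := fun y =>
  Set.indicator (bA i) (fun _ => (1:ℝ)) y
  + Set.indicator (pA' \ bA' i) (fun _ => (1:ℝ)) y
  + Set.indicator (Icc (3/9) ((4-t)/9)) (fun _ => (1:ℝ)) y
  + Set.indicator (Icc (4/9) ((4+t)/9)) (fun _ => (1:ℝ)) y
  + cpar i t * Set.indicator (rad i) (fun _ => (1:ℝ)) y
  + Set.indicator (Icc (7/9) ((8 - cpar i t)/9)) (fun _ => (1:ℝ)) y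
  + (1/5) * Set.indicator pD (fun _ => (1:ℝ)) y

def γ : ℝ → ℝ := fun y =>
  Set.indicator pA' (fun _ => (1:ℝ)) y + Set.indicator pB'' (fun _ => (1:ℝ)) y
  + Set.indicator pC' (fun _ => (1:ℝ)) y + (1/5) * Set.indicator pD (fun _ => (1:ℝ)) y

instance : IsFiniteMeasure μ01 := by
  constructor
  rw [μ01, Measure.restrict_apply_univ]
  simp [Real.volume_Icc]

lemma meas_rad (i : ℕ) : MeasurableSet (rad i) := by
  have h : rad i = pC ∩ (fun y : ℝ => ⌊(9*y-5)/2 * (2:ℝ)^i⌋) ⁻¹' {n : ℤ | Even n} := rfl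
  rw [h]
  have hm : Measurable (fun y : ℝ => ⌊(9*y-5)/2 * (2:ℝ)^i⌋) := by
    apply Measurable.floor
    exact (((measurable_id.const_mul 9).sub_const 5).div_const 2).mul_const _
  exact measurableSet_Ico.inter (hm ((Set.to_countable _).measurableSet))

lemma integrable_ind {S : Set ℝ} (hS : MeasurableSet S) :
    Integrable (Set.indicator S (fun _ => (1:ℝ))) μ01 := by
  rw [integrable_indicator_iff hS]
  exact integrableOn_const (measure_lt_top μ01 S).ne

lemma integral_ind {S : Set ℝ} (hS : MeasurableSet S) :
    ∫ y, Set.indicator S (fun _ => (1:ℝ)) y ∂μ01 = (μ01 S).toReal := by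
  rw [integral_indicator_const (1:ℝ) hS, smul_eq_mul, mul_one, measureReal_def]

lemma mu01_Icc_le {u v : ℝ} (huv : u ≤ v) : (μ01 (Icc u v)).toReal ≤ v - u := by
  have h1 : μ01 (Icc u v) ≤ volume (Icc u v) := by
    rw [μ01, Measure.restrict_apply measurableSet_Icc]
    exact measure_mono inter_subset_left
  refine ENNReal.toReal_le_of_le_ofReal (by linarith) (le_trans h1 ?_)
  rw [Real.volume_Icc]

lemma integrable_phi (i : ℕ) (t : ℝ) : Integrable (φ i t) μ01 := by
  unfold φ
  exact ((((((integrable_ind measurableSet_Ico).add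
    (integrable_ind (measurableSet_Ico.diff measurableSet_Ico))).add
    (integrable_ind measurableSet_Icc)).add
    (integrable_ind measurableSet_Icc)).add
    ((integrable_ind (meas_rad i)).const_mul _)).add
    (integrable_ind measurableSet_Icc)).add
    ((integrable_ind measurableSet_Ico).const_mul _)

lemma integrable_gamma : Integrable γ μ01 := by
  unfold γ
  exact (((integrable_ind measurableSet_Ico).add
    (integrable_ind measurableSet_Ico)).add
    (integrable_ind measurableSet_Ico)).add
    ((integrable_ind measurableSet_Ico).const_mul _)

def Fs (i : ℕ) (t : ℝ) : Lp ℝ 1 μ01 := (integrable_phi i t).toL1 _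
def gee : Lp ℝ 1 μ01 := integrable_gamma.toL1 γ

/- pointwise indicator lemmas -/
lemma ind_nonneg (S : Set ℝ) (y : ℝ) : 0 ≤ Set.indicator S (fun _ => (1:ℝ)) y :=
  Set.indicator_nonneg (fun _ _ => zero_le_one) y

lemma pt1 {S T : Set ℝ} (h : S ⊆ T) (y : ℝ) :
    |Set.indicator S (fun _ => (1:ℝ)) y| ≤ Set.indicator T (fun _ => (1:ℝ)) y := by
  rw [abs_of_nonneg (ind_nonneg _ _)]
  exact Set.indicator_le_indicator_apply_of_subset h zero_le_one

lemma pt2 {A B : Set ℝ} (h : B ⊆ A) (y : ℝ) :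
    |Set.indicator (A \ B) (fun _ => (1:ℝ)) y - Set.indicator A (fun _ => (1:ℝ)) y|
      ≤ Set.indicator B (fun _ => (1:ℝ)) y := by
  by_cases hB : y ∈ B
  · have hA : y ∈ A := h hB
    simp [Set.indicator_apply, hA, hB]
  · by_cases hA : y ∈ A <;> simp [Set.indicator_apply, hA, hB]

lemma pt3 {a b b' : ℝ} (h : b ≤ b') (y : ℝ) :
    |Set.indicator (Icc a b) (fun _ => (1:ℝ)) y - Set.indicator (Icc a b') (fun _ => (1:ℝ)) y|
      ≤ Set.indicator (Icc b b') (fun _ => (1:ℝ)) y := by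
  by_cases h1 : y ∈ Icc a b
  · rw [Set.indicator_of_mem h1, Set.indicator_of_mem (Set.mem_Icc.2 ⟨h1.1, le_trans h1.2 h⟩)]
    simpa using ind_nonneg (Icc b b') y
  · rw [Set.indicator_of_notMem h1]
    by_cases h2 : y ∈ Icc a b'
    · have hyb : b ≤ y := by
        by_contra hc; push_neg at hc; exact h1 ⟨h2.1, le_of_lt hc⟩
      rw [Set.indicator_of_mem h2, Set.indicator_of_mem (Set.mem_Icc.2 ⟨hyb, h2.2⟩)]
      norm_num
    · rw [Set.indicator_of_notMem h2]
      simpa using ind_nonneg (Icc b b') y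

lemma pt4 {a b b' : ℝ} (hab : a ≤ b) (hbb : b ≤ b') (y : ℝ) :
    |Set.indicator (Icc a b) (fun _ => (1:ℝ)) y - Set.indicator (Ico a b') (fun _ => (1:ℝ)) y|
      ≤ Set.indicator (Icc b b') (fun _ => (1:ℝ)) y := by
  by_cases h1 : y ∈ Icc a b
  · by_cases h2 : y ∈ Ico a b'
    · rw [Set.indicator_of_mem h1, Set.indicator_of_mem h2]
      simpa using ind_nonneg (Icc b b') y
    · have hyb : b' ≤ y := by
        by_contra hc; push_neg at hc; exact h2 ⟨h1.1, hc⟩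
      rw [Set.indicator_of_mem h1, Set.indicator_of_notMem h2,
        Set.indicator_of_mem (Set.mem_Icc.2 ⟨by linarith [h1.2], by linarith [h1.2]⟩)]
      norm_num
  · rw [Set.indicator_of_notMem h1]
    by_cases h2 : y ∈ Ico a b'
    · have hby : b < y := by
        by_contra hc; push_neg at hc; exact h1 ⟨h2.1, hc⟩
      rw [Set.indicator_of_mem h2,
        Set.indicator_of_mem (Set.mem_Icc.2 ⟨le_of_lt hby, le_of_lt h2.2⟩)]
      norm_num
    · rw [Set.indicator_of_notMem h2]
      simpa using ind_nonneg (Icc b b') y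

lemma key_bound {f : ℝ → ℝ} (hf : Integrable f μ01) {c u v : ℝ} (hc : 0 ≤ c) (huv : u ≤ v)
    (hb : ∀ y, |f y| ≤ c * Set.indicator (Icc u v) (fun _ => (1:ℝ)) y) :
    ‖hf.toL1 f‖ ≤ c * (v - u) := by
  rw [MeasureTheory.L1.norm_of_fun_eq_integral_norm]
  have hint : Integrable (fun y => c * Set.indicator (Icc u v) (fun _ => (1:ℝ)) y) μ01 :=
    (integrable_ind measurableSet_Icc).const_mul c
  calc ∫ y, ‖f y‖ ∂μ01
      ≤ ∫ y, c * Set.indicator (Icc u v) (fun _ => (1:ℝ)) y ∂μ01 := by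
        refine integral_mono hf.norm hint ?_
        intro y; dsimp only; rw [Real.norm_eq_abs]; exact hb y
    _ = c * (μ01 (Icc u v)).toReal := by
        rw [integral_const_mul, integral_ind measurableSet_Icc]
    _ ≤ c * (v - u) := mul_le_mul_of_nonneg_left (mu01_Icc_le huv) hc

end RadProof
end Rad2
noncomputable section Rad3
namespace RadProof
open MeasureTheory Set
set_option maxHeartbeats 4000000

lemma phi_eq_WR {i : ℕ} (hi : 1 ≤ i) {t : ℝ} (h0 : 0 < t) (h1 : blkL i ≤ t) (h2 : t < blkR i) :
    ∀ y ∈ Icc (0:ℝ) 1, φ i t y = WR ((1+t)/9) y := by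
  intro y hy
  obtain ⟨hy0, hy1⟩ := hy
  set x := (1+t)/9 with hxdef
  have hpow := half_pow_pos i
  have hpowle := half_pow_le_half hi
  have htwo := two_pow_pos i
  have hmt := half_mul_two i
  have ht1 : t < 1 := lt_trans h2 (blkR_lt_one i)
  have hbr1 := blkR_lt_one i
  have hxt : 9*x - 1 = t := by rw [hxdef]; ring
  have hc0 : 0 < cpar i t := by unfold cpar; unfold blkR at h2; nlinarith
  have hc1 : cpar i t ≤ 1 := by unfold cpar; unfold blkL at h1; nlinarith
  have hbrk : brk (9*x-1) = i := by rw [hxt]; exact brk_eq hi h1 h2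
  have hxA' : x ∈ pA' := by unfold pA'; rw [hxdef, Set.mem_Ico]; exact ⟨by linarith, by linarith⟩
  have hxb : (1:ℝ)/9 ≤ x ∧ x < 2/9 := hxA'
  have hxA : x ∉ pA := by unfold pA; rw [Set.mem_Ico]; push_neg; intro h; linarith [hxb.1]
  have hxB : x ∉ pB := by unfold pB; rw [Set.mem_Ico]; push_neg; intro h; linarith [hxb.2]
  have hxB1 : x ∉ pB' := by unfold pB'; rw [Set.mem_Ico]; push_neg; intro h; linarith [hxb.2]
  have hxB2 : x ∉ pB'' := by unfold pB''; rw [Set.mem_Ico]; push_neg; intro h; linarith [hxb.2]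
  have hxC : x ∉ pC := by unfold pC; rw [Set.mem_Ico]; push_neg; intro h; linarith [hxb.2]
  have hxC1 : x ∉ pC' := by unfold pC'; rw [Set.mem_Ico]; push_neg; intro h; linarith [hxb.2]
  have hxD : x ∉ pD := by unfold pD; rw [Set.mem_Ico]; push_neg; intro h; linarith [hxb.2]
  rcases lt_or_ge y (1/9) with hc1' | hd1
  · -- y in pA
    have hyy : y ∈ pA := by unfold pA; rw [Set.mem_Ico]; exact ⟨by linarith, by linarith⟩
    have hynA1 : y ∉ pA' := by unfold pA'; rw [Set.mem_Ico]; push_neg; intro h; linarith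
    have hynB : y ∉ pB := by unfold pB; rw [Set.mem_Ico]; push_neg; intro h; linarith
    have hynB1 : y ∉ pB' := by unfold pB'; rw [Set.mem_Ico]; push_neg; intro h; linarith
    have hynB11 : y ∉ pB'' := by unfold pB''; rw [Set.mem_Ico]; push_neg; intro h; linarith
    have hynC : y ∉ pC := by unfold pC; rw [Set.mem_Ico]; push_neg; intro h; linarith
    have hynC1 : y ∉ pC' := by unfold pC'; rw [Set.mem_Ico]; push_neg; intro h; linarith
    have hynD : y ∉ pD := by unfold pD; rw [Set.mem_Ico]; push_neg; intro h; linarith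
    have hW1 : WRo x y = 0 := by
      simp only [WRo]
      rw [if_neg (fun h => hxA h.1), if_neg (fun h => hynA1 h.2), if_neg (fun h => hxA h.1), if_neg (fun h => hxA h.1), if_neg (fun h => hxA h.1), if_neg (fun h => hynB1 h.2), if_neg (fun h => hynB11 h.2), if_neg (fun h => hxB h.1), if_neg (fun h => hxB1 h.1), if_neg (fun h => hxA h.1), if_neg (fun h => hynC1 h.2), if_neg (fun h => hxC1 h.1), if_neg (fun h => hynC h.2), if_neg (fun h => hxC h.1), if_neg (fun h => hynD h.2), if_neg (fun h => hxB2 h.1), if_neg (fun h => hxC1 h.1)]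
    have hW2 : WRo y x = (if brk (9*y) = brk (9*x-1) then 1 else 0) := by
      simp only [WRo]
      rw [if_neg (fun h => hxA h.2), if_neg (fun h => hynA1 h.1), if_pos ⟨hyy, hxA'⟩]
    have e2 : Set.indicator (pA' \ bA' i) (fun _ => (1:ℝ)) y = 0 := Set.indicator_of_notMem (fun hm => hynA1 hm.1) _
    have e3 : Set.indicator (Icc (3/9) ((4-t)/9)) (fun _ => (1:ℝ)) y = 0 := Set.indicator_of_notMem (by rw [Set.mem_Icc]; push_neg; intro h; linarith) _
    have e4 : Set.indicator (Icc (4/9) ((4+t)/9)) (fun _ => (1:ℝ)) y = 0 := Set.indicator_of_notMem (by rw [Set.mem_Icc]; push_neg; intro h; linarith) _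
    have e5 : Set.indicator (rad i) (fun _ => (1:ℝ)) y = 0 := Set.indicator_of_notMem (fun hm => by have h5 := hm.1.1; have h7 := hm.1.2; linarith) _
    have e6 : Set.indicator (Icc (7/9) ((8 - cpar i t)/9)) (fun _ => (1:ℝ)) y = 0 := Set.indicator_of_notMem (by rw [Set.mem_Icc]; push_neg; intro h; linarith) _
    have e7 : Set.indicator pD (fun _ => (1:ℝ)) y = 0 := Set.indicator_of_notMem hynD _
    rw [WR, hW1, hW2, hbrk]
    simp only [φ]
    rw [e2, e3, e4, e5, e6, e7]
    by_cases hbm : y ∈ bA i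
    · have h9y : brk (9*y) = i := by
        have hb' : blkL i / 9 ≤ y ∧ y < blkR i / 9 := hbm
        exact brk_eq hi (by linarith [hb'.1]) (by linarith [hb'.2])
      rw [Set.indicator_of_mem hbm, h9y, if_pos rfl]
      norm_num
    · have h9y : brk (9*y) ≠ i := by
        intro he
        obtain ⟨_, hbl, hbrr⟩ := brk_mem (by linarith : (0:ℝ) ≤ 9*y) (by linarith : (9:ℝ)*y < 1)
        rw [he] at hbl hbrr
        exact hbm (by unfold bA; rw [Set.mem_Ico]; exact ⟨by linarith, by linarith⟩)
      rw [Set.indicator_of_notMem hbm, if_neg h9y]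
      norm_num
  rcases lt_or_ge y (2/9) with hc2' | hd2
  · -- y in pA'
    have hynA : y ∉ pA := by unfold pA; rw [Set.mem_Ico]; push_neg; intro h; linarith
    have hyy : y ∈ pA' := by unfold pA'; rw [Set.mem_Ico]; exact ⟨by linarith, by linarith⟩
    have hynB : y ∉ pB := by unfold pB; rw [Set.mem_Ico]; push_neg; intro h; linarith
    have hynB1 : y ∉ pB' := by unfold pB'; rw [Set.mem_Ico]; push_neg; intro h; linarith
    have hynB11 : y ∉ pB'' := by unfold pB''; rw [Set.mem_Ico]; push_neg; intro h; linarith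
    have hynC : y ∉ pC := by unfold pC; rw [Set.mem_Ico]; push_neg; intro h; linarith
    have hynC1 : y ∉ pC' := by unfold pC'; rw [Set.mem_Ico]; push_neg; intro h; linarith
    have hynD : y ∉ pD := by unfold pD; rw [Set.mem_Ico]; push_neg; intro h; linarith
    have hW1 : WRo x y = (if brk (9*x-1) ≠ brk (9*y-1) then 1 else 0) := by
      simp only [WRo]
      rw [if_neg (fun h => hxA h.1), if_pos ⟨hxA', hyy⟩]
    have hW2 : WRo y x = (if brk (9*y-1) ≠ brk (9*x-1) then 1 else 0) := by
      simp only [WRo]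
      rw [if_neg (fun h => hynA h.1), if_pos ⟨hyy, hxA'⟩]
    have e1 : Set.indicator (bA i) (fun _ => (1:ℝ)) y = 0 := Set.indicator_of_notMem (by unfold bA; rw [Set.mem_Ico]; push_neg; intro h; have hbr := blkR_lt_one i; linarith) _
    have e3 : Set.indicator (Icc (3/9) ((4-t)/9)) (fun _ => (1:ℝ)) y = 0 := Set.indicator_of_notMem (by rw [Set.mem_Icc]; push_neg; intro h; linarith) _
    have e4 : Set.indicator (Icc (4/9) ((4+t)/9)) (fun _ => (1:ℝ)) y = 0 := Set.indicator_of_notMem (by rw [Set.mem_Icc]; push_neg; intro h; linarith) _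
    have e5 : Set.indicator (rad i) (fun _ => (1:ℝ)) y = 0 := Set.indicator_of_notMem (fun hm => by have h5 := hm.1.1; have h7 := hm.1.2; linarith) _
    have e6 : Set.indicator (Icc (7/9) ((8 - cpar i t)/9)) (fun _ => (1:ℝ)) y = 0 := Set.indicator_of_notMem (by rw [Set.mem_Icc]; push_neg; intro h; linarith) _
    have e7 : Set.indicator pD (fun _ => (1:ℝ)) y = 0 := Set.indicator_of_notMem hynD _
    have hsame : (if brk (9*y-1) ≠ brk (9*x-1) then (1:ℝ) else 0) = (if brk (9*x-1) ≠ brk (9*y-1) then (1:ℝ) else 0) := by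
      by_cases hh : brk (9*x-1) = brk (9*y-1)
      · rw [if_neg (by simp [hh]), if_neg (by simp [hh])]
      · rw [if_pos (fun hh2 => hh hh2.symm), if_pos hh]
    rw [WR, hW1, hW2, hsame, max_self, hbrk]
    simp only [φ]
    rw [e1, e3, e4, e5, e6, e7]
    by_cases hbm : y ∈ bA' i
    · have h9y : brk (9*y-1) = i := by
        have hb' : (1 + blkL i) / 9 ≤ y ∧ y < (1 + blkR i) / 9 := hbm
        exact brk_eq hi (by linarith [hb'.1]) (by linarith [hb'.2])
      rw [Set.indicator_of_notMem (fun hm => hm.2 hbm), h9y, if_neg (by simp)]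
      norm_num
    · have h9y : brk (9*y-1) ≠ i := by
        intro he
        obtain ⟨_, hbl, hbrr⟩ := brk_mem (by linarith : (0:ℝ) ≤ 9*y-1) (by linarith : (9:ℝ)*y-1 < 1)
        rw [he] at hbl hbrr
        exact hbm (by unfold bA'; rw [Set.mem_Ico]; exact ⟨by linarith, by linarith⟩)
      rw [Set.indicator_of_mem (Set.mem_diff_of_mem hyy hbm), if_pos (fun hh => h9y hh.symm)]
      norm_num
  rcases lt_or_ge y (3/9) with hc3' | hd3
  · -- y in pB
    have hynA : y ∉ pA := by unfold pA; rw [Set.mem_Ico]; push_neg; intro h; linarith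
    have hynA1 : y ∉ pA' := by unfold pA'; rw [Set.mem_Ico]; push_neg; intro h; linarith
    have hyy : y ∈ pB := by unfold pB; rw [Set.mem_Ico]; exact ⟨by linarith, by linarith⟩
    have hynB1 : y ∉ pB' := by unfold pB'; rw [Set.mem_Ico]; push_neg; intro h; linarith
    have hynB11 : y ∉ pB'' := by unfold pB''; rw [Set.mem_Ico]; push_neg; intro h; linarith
    have hynC : y ∉ pC := by unfold pC; rw [Set.mem_Ico]; push_neg; intro h; linarith
    have hynC1 : y ∉ pC' := by unfold pC'; rw [Set.mem_Ico]; push_neg; intro h; linarith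
    have hynD : y ∉ pD := by unfold pD; rw [Set.mem_Ico]; push_neg; intro h; linarith
    have hW1 : WRo x y = 0 := by
      simp only [WRo]
      rw [if_neg (fun h => hxA h.1), if_neg (fun h => hynA1 h.2), if_neg (fun h => hxA h.1), if_neg (fun h => hxA h.1), if_neg (fun h => hxA h.1), if_neg (fun h => hynB1 h.2), if_neg (fun h => hynB11 h.2), if_neg (fun h => hxB h.1), if_neg (fun h => hxB1 h.1), if_neg (fun h => hxA h.1), if_neg (fun h => hynC1 h.2), if_neg (fun h => hxC1 h.1), if_neg (fun h => hynC h.2), if_neg (fun h => hxC h.1), if_neg (fun h => hynD h.2), if_neg (fun h => hxB2 h.1), if_neg (fun h => hxC1 h.1)]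
    have hW2 : WRo y x = 0 := by
      simp only [WRo]
      rw [if_neg (fun h => hynA h.1), if_neg (fun h => hynA1 h.1), if_neg (fun h => hynA h.1), if_neg (fun h => hynA h.1), if_neg (fun h => hynA h.1), if_neg (fun h => hynA1 h.1), if_neg (fun h => hynA1 h.1), if_neg (fun h => hxB h.2), if_neg (fun h => hynB1 h.1), if_neg (fun h => hynA h.1), if_neg (fun h => hynA1 h.1), if_neg (fun h => hynC1 h.1), if_neg (fun h => hynA1 h.1), if_neg (fun h => hynC h.1), if_neg (fun h => h.1.elim (fun hh => hynA1 hh) (fun hh => hynB1 hh)), if_neg (fun h => hynB11 h.1), if_neg (fun h => hynC1 h.1)]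
    have e1 : Set.indicator (bA i) (fun _ => (1:ℝ)) y = 0 := Set.indicator_of_notMem (by unfold bA; rw [Set.mem_Ico]; push_neg; intro h; have hbr := blkR_lt_one i; linarith) _
    have e2 : Set.indicator (pA' \ bA' i) (fun _ => (1:ℝ)) y = 0 := Set.indicator_of_notMem (fun hm => hynA1 hm.1) _
    have e3 : Set.indicator (Icc (3/9) ((4-t)/9)) (fun _ => (1:ℝ)) y = 0 := Set.indicator_of_notMem (by rw [Set.mem_Icc]; push_neg; intro h; linarith) _
    have e4 : Set.indicator (Icc (4/9) ((4+t)/9)) (fun _ => (1:ℝ)) y = 0 := Set.indicator_of_notMem (by rw [Set.mem_Icc]; push_neg; intro h; linarith) _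
    have e5 : Set.indicator (rad i) (fun _ => (1:ℝ)) y = 0 := Set.indicator_of_notMem (fun hm => by have h5 := hm.1.1; have h7 := hm.1.2; linarith) _
    have e6 : Set.indicator (Icc (7/9) ((8 - cpar i t)/9)) (fun _ => (1:ℝ)) y = 0 := Set.indicator_of_notMem (by rw [Set.mem_Icc]; push_neg; intro h; linarith) _
    have e7 : Set.indicator pD (fun _ => (1:ℝ)) y = 0 := Set.indicator_of_notMem hynD _
    rw [WR, hW1, hW2]
    simp only [φ]
    rw [e1, e2, e3, e4, e5, e6, e7]
    norm_num
  rcases lt_or_ge y (4/9) with hc4' | hd4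
  · -- y in pB'
    have hynA : y ∉ pA := by unfold pA; rw [Set.mem_Ico]; push_neg; intro h; linarith
    have hynA1 : y ∉ pA' := by unfold pA'; rw [Set.mem_Ico]; push_neg; intro h; linarith
    have hynB : y ∉ pB := by unfold pB; rw [Set.mem_Ico]; push_neg; intro h; linarith
    have hyy : y ∈ pB' := by unfold pB'; rw [Set.mem_Ico]; exact ⟨by linarith, by linarith⟩
    have hynB11 : y ∉ pB'' := by unfold pB''; rw [Set.mem_Ico]; push_neg; intro h; linarith
    have hynC : y ∉ pC := by unfold pC; rw [Set.mem_Ico]; push_neg; intro h; linarith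
    have hynC1 : y ∉ pC' := by unfold pC'; rw [Set.mem_Ico]; push_neg; intro h; linarith
    have hynD : y ∉ pD := by unfold pD; rw [Set.mem_Ico]; push_neg; intro h; linarith
    have hW1 : WRo x y = (if t + (9*y-3) ≤ 1 then 1 else 0) := by
      simp only [WRo]
      rw [if_neg (fun h => hxA h.1), if_neg (fun h => hynA1 h.2), if_neg (fun h => hxA h.1), if_neg (fun h => hxA h.1), if_neg (fun h => hxA h.1), if_pos ⟨hxA', hyy⟩, hxt]
    have hW2 : WRo y x = 0 := by
      simp only [WRo]
      rw [if_neg (fun h => hynA h.1), if_neg (fun h => hynA1 h.1), if_neg (fun h => hynA h.1), if_neg (fun h => hynA h.1), if_neg (fun h => hynA h.1), if_neg (fun h => hynA1 h.1), if_neg (fun h => hynA1 h.1), if_neg (fun h => hynB h.1), if_neg (fun h => hxB1 h.2), if_neg (fun h => hynA h.1), if_neg (fun h => hynA1 h.1), if_neg (fun h => hynC1 h.1), if_neg (fun h => hynA1 h.1), if_neg (fun h => hynC h.1), if_neg (fun h => hxD h.2), if_neg (fun h => hynB11 h.1), if_neg (fun h => hynC1 h.1)]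
    have e1 : Set.indicator (bA i) (fun _ => (1:ℝ)) y = 0 := Set.indicator_of_notMem (by unfold bA; rw [Set.mem_Ico]; push_neg; intro h; have hbr := blkR_lt_one i; linarith) _
    have e2 : Set.indicator (pA' \ bA' i) (fun _ => (1:ℝ)) y = 0 := Set.indicator_of_notMem (fun hm => hynA1 hm.1) _
    have e4 : Set.indicator (Icc (4/9) ((4+t)/9)) (fun _ => (1:ℝ)) y = 0 := Set.indicator_of_notMem (by rw [Set.mem_Icc]; push_neg; intro h; linarith) _
    have e5 : Set.indicator (rad i) (fun _ => (1:ℝ)) y = 0 := Set.indicator_of_notMem (fun hm => by have h5 := hm.1.1; have h7 := hm.1.2; linarith) _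
    have e6 : Set.indicator (Icc (7/9) ((8 - cpar i t)/9)) (fun _ => (1:ℝ)) y = 0 := Set.indicator_of_notMem (by rw [Set.mem_Icc]; push_neg; intro h; linarith) _
    have e7 : Set.indicator pD (fun _ => (1:ℝ)) y = 0 := Set.indicator_of_notMem hynD _
    rw [WR, hW1, hW2, max_eq_left (by split_ifs <;> norm_num)]
    simp only [φ]
    rw [e1, e2, e4, e5, e6, e7]
    by_cases hcnd : t + (9*y-3) ≤ 1
    · rw [if_pos hcnd, Set.indicator_of_mem (Set.mem_Icc.2 ⟨by linarith, by linarith⟩)]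
      norm_num
    · push_neg at hcnd
      rw [if_neg (by push_neg; linarith), Set.indicator_of_notMem (by rw [Set.mem_Icc]; push_neg; intro h; linarith)]
      norm_num
  rcases lt_or_ge y (5/9) with hc5' | hd5
  · -- y in pB''
    have hynA : y ∉ pA := by unfold pA; rw [Set.mem_Ico]; push_neg; intro h; linarith
    have hynA1 : y ∉ pA' := by unfold pA'; rw [Set.mem_Ico]; push_neg; intro h; linarith
    have hynB : y ∉ pB := by unfold pB; rw [Set.mem_Ico]; push_neg; intro h; linarith
    have hynB1 : y ∉ pB' := by unfold pB'; rw [Set.mem_Ico]; push_neg; intro h; linarith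
    have hyy : y ∈ pB'' := by unfold pB''; rw [Set.mem_Ico]; exact ⟨by linarith, by linarith⟩
    have hynC : y ∉ pC := by unfold pC; rw [Set.mem_Ico]; push_neg; intro h; linarith
    have hynC1 : y ∉ pC' := by unfold pC'; rw [Set.mem_Ico]; push_neg; intro h; linarith
    have hynD : y ∉ pD := by unfold pD; rw [Set.mem_Ico]; push_neg; intro h; linarith
    have hW1 : WRo x y = (if 9*y-4 ≤ t then 1 else 0) := by
      simp only [WRo]
      rw [if_neg (fun h => hxA h.1), if_neg (fun h => hynA1 h.2), if_neg (fun h => hxA h.1), if_neg (fun h => hxA h.1), if_neg (fun h => hxA h.1), if_neg (fun h => hynB1 h.2), if_pos ⟨hxA', hyy⟩, hxt]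
    have hW2 : WRo y x = 0 := by
      simp only [WRo]
      rw [if_neg (fun h => hynA h.1), if_neg (fun h => hynA1 h.1), if_neg (fun h => hynA h.1), if_neg (fun h => hynA h.1), if_neg (fun h => hynA h.1), if_neg (fun h => hynA1 h.1), if_neg (fun h => hynA1 h.1), if_neg (fun h => hynB h.1), if_neg (fun h => hynB1 h.1), if_neg (fun h => hynA h.1), if_neg (fun h => hynA1 h.1), if_neg (fun h => hynC1 h.1), if_neg (fun h => hynA1 h.1), if_neg (fun h => hynC h.1), if_neg (fun h => h.1.elim (fun hh => hynA1 hh) (fun hh => hynB1 hh)), if_neg (fun h => hxD h.2), if_neg (fun h => hynC1 h.1)]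
    have e1 : Set.indicator (bA i) (fun _ => (1:ℝ)) y = 0 := Set.indicator_of_notMem (by unfold bA; rw [Set.mem_Ico]; push_neg; intro h; have hbr := blkR_lt_one i; linarith) _
    have e2 : Set.indicator (pA' \ bA' i) (fun _ => (1:ℝ)) y = 0 := Set.indicator_of_notMem (fun hm => hynA1 hm.1) _
    have e3 : Set.indicator (Icc (3/9) ((4-t)/9)) (fun _ => (1:ℝ)) y = 0 := Set.indicator_of_notMem (by rw [Set.mem_Icc]; push_neg; intro h; linarith) _
    have e5 : Set.indicator (rad i) (fun _ => (1:ℝ)) y = 0 := Set.indicator_of_notMem (fun hm => by have h5 := hm.1.1; have h7 := hm.1.2; linarith) _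
    have e6 : Set.indicator (Icc (7/9) ((8 - cpar i t)/9)) (fun _ => (1:ℝ)) y = 0 := Set.indicator_of_notMem (by rw [Set.mem_Icc]; push_neg; intro h; linarith) _
    have e7 : Set.indicator pD (fun _ => (1:ℝ)) y = 0 := Set.indicator_of_notMem hynD _
    rw [WR, hW1, hW2, max_eq_left (by split_ifs <;> norm_num)]
    simp only [φ]
    rw [e1, e2, e3, e5, e6, e7]
    by_cases hcnd : 9*y-4 ≤ t
    · rw [if_pos hcnd, Set.indicator_of_mem (Set.mem_Icc.2 ⟨by linarith, by linarith⟩)]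
      norm_num
    · push_neg at hcnd
      rw [if_neg (by push_neg; linarith), Set.indicator_of_notMem (by rw [Set.mem_Icc]; push_neg; intro h; linarith)]
      norm_num
  rcases lt_or_ge y (7/9) with hc6' | hd6
  · -- y in pC
    have hynA : y ∉ pA := by unfold pA; rw [Set.mem_Ico]; push_neg; intro h; linarith
    have hynA1 : y ∉ pA' := by unfold pA'; rw [Set.mem_Ico]; push_neg; intro h; linarith
    have hynB : y ∉ pB := by unfold pB; rw [Set.mem_Ico]; push_neg; intro h; linarith
    have hynB1 : y ∉ pB' := by unfold pB'; rw [Set.mem_Ico]; push_neg; intro h; linarith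
    have hynB11 : y ∉ pB'' := by unfold pB''; rw [Set.mem_Ico]; push_neg; intro h; linarith
    have hyy : y ∈ pC := by unfold pC; rw [Set.mem_Ico]; exact ⟨by linarith, by linarith⟩
    have hynC1 : y ∉ pC' := by unfold pC'; rw [Set.mem_Ico]; push_neg; intro h; linarith
    have hynD : y ∉ pD := by unfold pD; rw [Set.mem_Ico]; push_neg; intro h; linarith
    have hW1 : WRo x y = (if Even ⌊(9*y-5)/2 * (2:ℝ)^i⌋ then cpar i t else 0) := by
      simp only [WRo]
      rw [if_neg (fun h => hxA h.1), if_neg (fun h => hynA1 h.2), if_neg (fun h => hxA h.1), if_neg (fun h => hxA h.1), if_neg (fun h => hxA h.1), if_neg (fun h => hynB1 h.2), if_neg (fun h => hynB11 h.2), if_neg (fun h => hxB h.1), if_neg (fun h => hxB1 h.1), if_neg (fun h => hxA h.1), if_neg (fun h => hynC1 h.2), if_neg (fun h => hxC1 h.1), if_pos ⟨hxA', hyy⟩, hbrk, hxt]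
      rfl
    have hW2 : WRo y x = 0 := by
      simp only [WRo]
      rw [if_neg (fun h => hynA h.1), if_neg (fun h => hynA1 h.1), if_neg (fun h => hynA h.1), if_neg (fun h => hynA h.1), if_neg (fun h => hynA h.1), if_neg (fun h => hynA1 h.1), if_neg (fun h => hynA1 h.1), if_neg (fun h => hynB h.1), if_neg (fun h => hynB1 h.1), if_neg (fun h => hynA h.1), if_neg (fun h => hynA1 h.1), if_neg (fun h => hynC1 h.1), if_neg (fun h => hynA1 h.1), if_neg (fun h => hxC h.2), if_neg (fun h => h.1.elim (fun hh => hynA1 hh) (fun hh => hynB1 hh)), if_neg (fun h => hynB11 h.1), if_neg (fun h => hynC1 h.1)]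
    have e1 : Set.indicator (bA i) (fun _ => (1:ℝ)) y = 0 := Set.indicator_of_notMem (by unfold bA; rw [Set.mem_Ico]; push_neg; intro h; have hbr := blkR_lt_one i; linarith) _
    have e2 : Set.indicator (pA' \ bA' i) (fun _ => (1:ℝ)) y = 0 := Set.indicator_of_notMem (fun hm => hynA1 hm.1) _
    have e3 : Set.indicator (Icc (3/9) ((4-t)/9)) (fun _ => (1:ℝ)) y = 0 := Set.indicator_of_notMem (by rw [Set.mem_Icc]; push_neg; intro h; linarith) _
    have e4 : Set.indicator (Icc (4/9) ((4+t)/9)) (fun _ => (1:ℝ)) y = 0 := Set.indicator_of_notMem (by rw [Set.mem_Icc]; push_neg; intro h; linarith) _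
    have e6 : Set.indicator (Icc (7/9) ((8 - cpar i t)/9)) (fun _ => (1:ℝ)) y = 0 := Set.indicator_of_notMem (by rw [Set.mem_Icc]; push_neg; intro h; linarith) _
    have e7 : Set.indicator pD (fun _ => (1:ℝ)) y = 0 := Set.indicator_of_notMem hynD _
    rw [WR, hW1, hW2, max_eq_left (by split_ifs <;> [linarith; norm_num])]
    simp only [φ]
    rw [e1, e2, e3, e4, e6, e7]
    by_cases heven : Even ⌊(9*y-5)/2 * (2:ℝ)^i⌋
    · have hmem : y ∈ rad i := ⟨hyy, heven⟩
      rw [if_pos heven, Set.indicator_of_mem hmem]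
      norm_num
    · rw [if_neg heven, Set.indicator_of_notMem (fun hm => heven hm.2)]
      norm_num
  rcases lt_or_ge y (8/9) with hc7' | hd7
  · -- y in pC'
    have hynA : y ∉ pA := by unfold pA; rw [Set.mem_Ico]; push_neg; intro h; linarith
    have hynA1 : y ∉ pA' := by unfold pA'; rw [Set.mem_Ico]; push_neg; intro h; linarith
    have hynB : y ∉ pB := by unfold pB; rw [Set.mem_Ico]; push_neg; intro h; linarith
    have hynB1 : y ∉ pB' := by unfold pB'; rw [Set.mem_Ico]; push_neg; intro h; linarith
    have hynB11 : y ∉ pB'' := by unfold pB''; rw [Set.mem_Ico]; push_neg; intro h; linarith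
    have hynC : y ∉ pC := by unfold pC; rw [Set.mem_Ico]; push_neg; intro h; linarith
    have hyy : y ∈ pC' := by unfold pC'; rw [Set.mem_Ico]; exact ⟨by linarith, by linarith⟩
    have hynD : y ∉ pD := by unfold pD; rw [Set.mem_Ico]; push_neg; intro h; linarith
    have hW1 : WRo x y = (if cpar i t + (9*y-7) ≤ 1 then 1 else 0) := by
      simp only [WRo]
      rw [if_neg (fun h => hxA h.1), if_neg (fun h => hynA1 h.2), if_neg (fun h => hxA h.1), if_neg (fun h => hxA h.1), if_neg (fun h => hxA h.1), if_neg (fun h => hynB1 h.2), if_neg (fun h => hynB11 h.2), if_neg (fun h => hxB h.1), if_neg (fun h => hxB1 h.1), if_neg (fun h => hxA h.1), if_pos ⟨hxA', hyy⟩, hbrk, hxt]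
      rfl
    have hW2 : WRo y x = 0 := by
      simp only [WRo]
      rw [if_neg (fun h => hynA h.1), if_neg (fun h => hynA1 h.1), if_neg (fun h => hynA h.1), if_neg (fun h => hynA h.1), if_neg (fun h => hynA h.1), if_neg (fun h => hynA1 h.1), if_neg (fun h => hynA1 h.1), if_neg (fun h => hynB h.1), if_neg (fun h => hynB1 h.1), if_neg (fun h => hynA h.1), if_neg (fun h => hynA1 h.1), if_neg (fun h => hxC1 h.2), if_neg (fun h => hynA1 h.1), if_neg (fun h => hynC h.1), if_neg (fun h => h.1.elim (fun hh => hynA1 hh) (fun hh => hynB1 hh)), if_neg (fun h => hynB11 h.1), if_neg (fun h => hxD h.2)]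
    have e1 : Set.indicator (bA i) (fun _ => (1:ℝ)) y = 0 := Set.indicator_of_notMem (by unfold bA; rw [Set.mem_Ico]; push_neg; intro h; have hbr := blkR_lt_one i; linarith) _
    have e2 : Set.indicator (pA' \ bA' i) (fun _ => (1:ℝ)) y = 0 := Set.indicator_of_notMem (fun hm => hynA1 hm.1) _
    have e3 : Set.indicator (Icc (3/9) ((4-t)/9)) (fun _ => (1:ℝ)) y = 0 := Set.indicator_of_notMem (by rw [Set.mem_Icc]; push_neg; intro h; linarith) _
    have e4 : Set.indicator (Icc (4/9) ((4+t)/9)) (fun _ => (1:ℝ)) y = 0 := Set.indicator_of_notMem (by rw [Set.mem_Icc]; push_neg; intro h; linarith) _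
    have e5 : Set.indicator (rad i) (fun _ => (1:ℝ)) y = 0 := Set.indicator_of_notMem (fun hm => by have h5 := hm.1.1; have h7 := hm.1.2; linarith) _
    have e7 : Set.indicator pD (fun _ => (1:ℝ)) y = 0 := Set.indicator_of_notMem hynD _
    rw [WR, hW1, hW2, max_eq_left (by split_ifs <;> norm_num)]
    simp only [φ]
    rw [e1, e2, e3, e4, e5, e7]
    by_cases hcnd : cpar i t + (9*y-7) ≤ 1
    · rw [if_pos hcnd, Set.indicator_of_mem (Set.mem_Icc.2 ⟨by linarith, by linarith⟩)]
      norm_num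
    · push_neg at hcnd
      rw [if_neg (by push_neg; linarith), Set.indicator_of_notMem (by rw [Set.mem_Icc]; push_neg; intro h; linarith)]
      norm_num
  rcases lt_or_ge y 1 with hc8' | hd8
  · -- y in pD
    have hynA : y ∉ pA := by unfold pA; rw [Set.mem_Ico]; push_neg; intro h; linarith
    have hynA1 : y ∉ pA' := by unfold pA'; rw [Set.mem_Ico]; push_neg; intro h; linarith
    have hynB : y ∉ pB := by unfold pB; rw [Set.mem_Ico]; push_neg; intro h; linarith
    have hynB1 : y ∉ pB' := by unfold pB'; rw [Set.mem_Ico]; push_neg; intro h; linarith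
    have hynB11 : y ∉ pB'' := by unfold pB''; rw [Set.mem_Ico]; push_neg; intro h; linarith
    have hynC : y ∉ pC := by unfold pC; rw [Set.mem_Ico]; push_neg; intro h; linarith
    have hynC1 : y ∉ pC' := by unfold pC'; rw [Set.mem_Ico]; push_neg; intro h; linarith
    have hyy : y ∈ pD := by unfold pD; rw [Set.mem_Ico]; exact ⟨by linarith, by linarith⟩
    have hW1 : WRo x y = 0.2 := by
      simp only [WRo]
      rw [if_neg (fun h => hxA h.1), if_neg (fun h => hynA1 h.2), if_neg (fun h => hxA h.1), if_neg (fun h => hxA h.1), if_neg (fun h => hxA h.1), if_neg (fun h => hynB1 h.2), if_neg (fun h => hynB11 h.2), if_neg (fun h => hxB h.1), if_neg (fun h => hxB1 h.1), if_neg (fun h => hxA h.1), if_neg (fun h => hynC1 h.2), if_neg (fun h => hxC1 h.1), if_neg (fun h => hynC h.2), if_neg (fun h => hxC h.1), if_pos ⟨Or.inl hxA', hyy⟩]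
    have hW2 : WRo y x = 0 := by
      simp only [WRo]
      rw [if_neg (fun h => hynA h.1), if_neg (fun h => hynA1 h.1), if_neg (fun h => hynA h.1), if_neg (fun h => hynA h.1), if_neg (fun h => hynA h.1), if_neg (fun h => hynA1 h.1), if_neg (fun h => hynA1 h.1), if_neg (fun h => hynB h.1), if_neg (fun h => hynB1 h.1), if_neg (fun h => hynA h.1), if_neg (fun h => hynA1 h.1), if_neg (fun h => hynC1 h.1), if_neg (fun h => hynA1 h.1), if_neg (fun h => hynC h.1), if_neg (fun h => h.1.elim (fun hh => hynA1 hh) (fun hh => hynB1 hh)), if_neg (fun h => hynB11 h.1), if_neg (fun h => hynC1 h.1)]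
    have e1 : Set.indicator (bA i) (fun _ => (1:ℝ)) y = 0 := Set.indicator_of_notMem (by unfold bA; rw [Set.mem_Ico]; push_neg; intro h; have hbr := blkR_lt_one i; linarith) _
    have e2 : Set.indicator (pA' \ bA' i) (fun _ => (1:ℝ)) y = 0 := Set.indicator_of_notMem (fun hm => hynA1 hm.1) _
    have e3 : Set.indicator (Icc (3/9) ((4-t)/9)) (fun _ => (1:ℝ)) y = 0 := Set.indicator_of_notMem (by rw [Set.mem_Icc]; push_neg; intro h; linarith) _
    have e4 : Set.indicator (Icc (4/9) ((4+t)/9)) (fun _ => (1:ℝ)) y = 0 := Set.indicator_of_notMem (by rw [Set.mem_Icc]; push_neg; intro h; linarith) _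
    have e5 : Set.indicator (rad i) (fun _ => (1:ℝ)) y = 0 := Set.indicator_of_notMem (fun hm => by have h5 := hm.1.1; have h7 := hm.1.2; linarith) _
    have e6 : Set.indicator (Icc (7/9) ((8 - cpar i t)/9)) (fun _ => (1:ℝ)) y = 0 := Set.indicator_of_notMem (by rw [Set.mem_Icc]; push_neg; intro h; linarith) _
    rw [WR, hW1, hW2, max_eq_left (by norm_num)]
    simp only [φ]
    rw [e1, e2, e3, e4, e5, e6, Set.indicator_of_mem hyy]
    norm_num
  · -- y = 1
    have hy1' : y = 1 := le_antisymm hy1 hd8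
    have hynA : y ∉ pA := by unfold pA; rw [Set.mem_Ico]; push_neg; intro h; linarith
    have hynA1 : y ∉ pA' := by unfold pA'; rw [Set.mem_Ico]; push_neg; intro h; linarith
    have hynB : y ∉ pB := by unfold pB; rw [Set.mem_Ico]; push_neg; intro h; linarith
    have hynB1 : y ∉ pB' := by unfold pB'; rw [Set.mem_Ico]; push_neg; intro h; linarith
    have hynB11 : y ∉ pB'' := by unfold pB''; rw [Set.mem_Ico]; push_neg; intro h; linarith
    have hynC : y ∉ pC := by unfold pC; rw [Set.mem_Ico]; push_neg; intro h; linarith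
    have hynC1 : y ∉ pC' := by unfold pC'; rw [Set.mem_Ico]; push_neg; intro h; linarith
    have hynD : y ∉ pD := by unfold pD; rw [Set.mem_Ico]; push_neg; intro h; linarith
    have hW1 : WRo x y = 0 := by
      simp only [WRo]
      rw [if_neg (fun h => hxA h.1), if_neg (fun h => hynA1 h.2), if_neg (fun h => hxA h.1), if_neg (fun h => hxA h.1), if_neg (fun h => hxA h.1), if_neg (fun h => hynB1 h.2), if_neg (fun h => hynB11 h.2), if_neg (fun h => hxB h.1), if_neg (fun h => hxB1 h.1), if_neg (fun h => hxA h.1), if_neg (fun h => hynC1 h.2), if_neg (fun h => hxC1 h.1), if_neg (fun h => hynC h.2), if_neg (fun h => hxC h.1), if_neg (fun h => hynD h.2), if_neg (fun h => hxB2 h.1), if_neg (fun h => hxC1 h.1)]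
    have hW2 : WRo y x = 0 := by
      simp only [WRo]
      rw [if_neg (fun h => hynA h.1), if_neg (fun h => hynA1 h.1), if_neg (fun h => hynA h.1), if_neg (fun h => hynA h.1), if_neg (fun h => hynA h.1), if_neg (fun h => hynA1 h.1), if_neg (fun h => hynA1 h.1), if_neg (fun h => hynB h.1), if_neg (fun h => hynB1 h.1), if_neg (fun h => hynA h.1), if_neg (fun h => hynA1 h.1), if_neg (fun h => hynC1 h.1), if_neg (fun h => hynA1 h.1), if_neg (fun h => hynC h.1), if_neg (fun h => h.1.elim (fun hh => hynA1 hh) (fun hh => hynB1 hh)), if_neg (fun h => hynB11 h.1), if_neg (fun h => hynC1 h.1)]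
    have e1 : Set.indicator (bA i) (fun _ => (1:ℝ)) y = 0 := Set.indicator_of_notMem (by unfold bA; rw [Set.mem_Ico]; push_neg; intro h; have hbr := blkR_lt_one i; linarith) _
    have e2 : Set.indicator (pA' \ bA' i) (fun _ => (1:ℝ)) y = 0 := Set.indicator_of_notMem (fun hm => hynA1 hm.1) _
    have e3 : Set.indicator (Icc (3/9) ((4-t)/9)) (fun _ => (1:ℝ)) y = 0 := Set.indicator_of_notMem (by rw [Set.mem_Icc]; push_neg; intro h; linarith) _
    have e4 : Set.indicator (Icc (4/9) ((4+t)/9)) (fun _ => (1:ℝ)) y = 0 := Set.indicator_of_notMem (by rw [Set.mem_Icc]; push_neg; intro h; linarith) _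
    have e5 : Set.indicator (rad i) (fun _ => (1:ℝ)) y = 0 := Set.indicator_of_notMem (fun hm => by have h5 := hm.1.1; have h7 := hm.1.2; linarith) _
    have e6 : Set.indicator (Icc (7/9) ((8 - cpar i t)/9)) (fun _ => (1:ℝ)) y = 0 := Set.indicator_of_notMem (by rw [Set.mem_Icc]; push_neg; intro h; linarith) _
    have e7 : Set.indicator pD (fun _ => (1:ℝ)) y = 0 := Set.indicator_of_notMem hynD _
    rw [WR, hW1, hW2]
    simp only [φ]
    rw [e1, e2, e3, e4, e5, e6, e7]
    norm_num

end RadProof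
end Rad3
noncomputable section Rad4
namespace RadProof
open MeasureTheory Set
set_option maxHeartbeats 1000000

lemma cpar_nonneg {i : ℕ} {t : ℝ} (h2 : t ≤ blkR i) : 0 ≤ cpar i t := by
  unfold cpar; unfold blkR at h2; nlinarith [two_pow_pos i]
lemma cpar_le_one {i : ℕ} {t : ℝ} (h1 : blkL i ≤ t) : cpar i t ≤ 1 := by
  unfold cpar; unfold blkL at h1; nlinarith [two_pow_pos i, half_mul_two i]

lemma norm_Fs_sub_gee {i : ℕ} (hi : 1 ≤ i) {t : ℝ} (h0 : 0 < t) (h1 : blkL i ≤ t)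
    (h2 : t < blkR i) :
    ‖Fs i t - gee‖ ≤ 3*(1/2:ℝ)^i + 2*(1-t) + 3*(cpar i t) := by
  have hpow := half_pow_pos i
  have hpowle := half_pow_le_half hi
  have ht1 : t < 1 := lt_trans h2 (blkR_lt_one i)
  have hbr1 := blkR_lt_one i
  have hbl0 := blkL_nonneg hi
  have hc0 : 0 ≤ cpar i t := cpar_nonneg (le_of_lt h2)
  have hc1 : cpar i t ≤ 1 := cpar_le_one h1
  set c := cpar i t with hcdef
  set f1 : ℝ → ℝ := Set.indicator (bA i) (fun _ => (1:ℝ)) with hf1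
  set f2 : ℝ → ℝ := fun y => Set.indicator (pA' \ bA' i) (fun _ => (1:ℝ)) y
    - Set.indicator pA' (fun _ => (1:ℝ)) y with hf2
  set f3 : ℝ → ℝ := Set.indicator (Icc (3/9) ((4-t)/9)) (fun _ => (1:ℝ)) with hf3
  set f4 : ℝ → ℝ := fun y => Set.indicator (Icc (4/9) ((4+t)/9)) (fun _ => (1:ℝ)) y
    - Set.indicator pB'' (fun _ => (1:ℝ)) y with hf4
  set f5 : ℝ → ℝ := fun y => c * Set.indicator (rad i) (fun _ => (1:ℝ)) y with hf5
  set f6 : ℝ → ℝ := fun y => Set.indicator (Icc (7/9) ((8-c)/9)) (fun _ => (1:ℝ)) y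
    - Set.indicator pC' (fun _ => (1:ℝ)) y with hf6
  have hI1 : Integrable f1 μ01 := integrable_ind measurableSet_Ico
  have hI2 : Integrable f2 μ01 :=
    (integrable_ind (measurableSet_Ico.diff measurableSet_Ico)).sub
      (integrable_ind measurableSet_Ico)
  have hI3 : Integrable f3 μ01 := integrable_ind measurableSet_Icc
  have hI4 : Integrable f4 μ01 :=
    (integrable_ind measurableSet_Icc).sub (integrable_ind measurableSet_Ico)
  have hI5 : Integrable f5 μ01 := (integrable_ind (meas_rad i)).const_mul _
  have hI6 : Integrable f6 μ01 :=
    (integrable_ind measurableSet_Icc).sub (integrable_ind measurableSet_Ico)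
  have hkey : Fs i t - gee = hI1.toL1 f1 + hI2.toL1 f2 + hI3.toL1 f3 + hI4.toL1 f4
      + hI5.toL1 f5 + hI6.toL1 f6 := by
    have hs : Fs i t - gee
        = ((integrable_phi i t).sub integrable_gamma).toL1 (fun y => φ i t y - γ y) := rfl
    rw [hs]
    rw [show (hI1.toL1 f1 + hI2.toL1 f2 + hI3.toL1 f3 + hI4.toL1 f4 + hI5.toL1 f5
        + hI6.toL1 f6)
        = (((((hI1.add hI2).add hI3).add hI4).add hI5).add hI6).toL1
          (fun y => f1 y + f2 y + f3 y + f4 y + f5 y + f6 y) from rfl]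
    apply (Integrable.toL1_eq_toL1_iff _ _ _ _).2
    apply Filter.Eventually.of_forall
    intro y
    simp only [hf1, hf2, hf3, hf4, hf5, hf6, φ, γ]
    ring
  rw [hkey]
  have hd1 : (blkR i)/9 - (blkL i)/9 = (1/2:ℝ)^i/9 := by unfold blkL blkR; ring
  have hd2 : (1 + blkR i)/9 - (1 + blkL i)/9 = (1/2:ℝ)^i/9 := by unfold blkL blkR; ring
  have hb1 : ‖hI1.toL1 f1‖ ≤ 1 * ((blkR i)/9 - (blkL i)/9) := by
    refine key_bound hI1 (by norm_num) (by linarith [blkL_lt_blkR i]) ?_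
    intro y; rw [one_mul]
    exact pt1 (by unfold bA; exact Ico_subset_Icc_self) y
  have hb2 : ‖hI2.toL1 f2‖ ≤ 1 * ((1 + blkR i)/9 - (1 + blkL i)/9) := by
    refine key_bound hI2 (by norm_num) (by linarith [blkL_lt_blkR i]) ?_
    intro y; rw [one_mul]
    have hsub : bA' i ⊆ pA' := by
      unfold bA' pA'; apply Ico_subset_Ico <;> linarith
    calc |f2 y| ≤ Set.indicator (bA' i) (fun _ => (1:ℝ)) y := pt2 hsub y
    _ ≤ _ := Set.indicator_le_indicator_apply_of_subset
        (by unfold bA'; exact Ico_subset_Icc_self) zero_le_one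
  have hb3 : ‖hI3.toL1 f3‖ ≤ 1 * ((4-t)/9 - 3/9) := by
    refine key_bound hI3 (by norm_num) (by linarith) ?_
    intro y; rw [one_mul]; exact pt1 (subset_refl _) y
  have hb4 : ‖hI4.toL1 f4‖ ≤ 1 * ((5:ℝ)/9 - (4+t)/9) := by
    refine key_bound hI4 (by norm_num) (by linarith) ?_
    intro y; rw [one_mul]
    exact pt4 (by linarith) (by linarith) y
  have hb5 : ‖hI5.toL1 f5‖ ≤ c * ((7:ℝ)/9 - 5/9) := by
    refine key_bound hI5 hc0 (by norm_num) ?_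
    intro y
    rw [hf5]
    calc |c * Set.indicator (rad i) (fun _ => (1:ℝ)) y|
        = c * |Set.indicator (rad i) (fun _ => (1:ℝ)) y| := by
          rw [abs_mul, abs_of_nonneg hc0]
    _ ≤ c * Set.indicator (Icc (5/9) (7/9)) (fun _ => (1:ℝ)) y := by
          apply mul_le_mul_of_nonneg_left _ hc0
          exact pt1 (fun z hz => Ico_subset_Icc_self hz.1) y
  have hb6 : ‖hI6.toL1 f6‖ ≤ 1 * ((8:ℝ)/9 - (8-c)/9) := by
    refine key_bound hI6 (by norm_num) (by linarith) ?_
    intro y; rw [one_mul]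
    exact pt4 (by linarith) (by linarith) y
  have htri : ‖hI1.toL1 f1 + hI2.toL1 f2 + hI3.toL1 f3 + hI4.toL1 f4 + hI5.toL1 f5
      + hI6.toL1 f6‖
      ≤ ‖hI1.toL1 f1‖ + ‖hI2.toL1 f2‖ + ‖hI3.toL1 f3‖ + ‖hI4.toL1 f4‖ + ‖hI5.toL1 f5‖
      + ‖hI6.toL1 f6‖ := by
    refine le_trans (norm_add_le _ _) (add_le_add_left ?_ _)
    refine le_trans (norm_add_le _ _) (add_le_add_left ?_ _)
    refine le_trans (norm_add_le _ _) (add_le_add_left ?_ _)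
    refine le_trans (norm_add_le _ _) (add_le_add_left ?_ _)
    exact norm_add_le _ _
  rw [hd1] at hb1
  rw [hd2] at hb2
  have e3 : (4-t)/9 - 3/9 = (1-t)/9 := by ring
  have e4 : (5:ℝ)/9 - (4+t)/9 = (1-t)/9 := by ring
  have e6 : (8:ℝ)/9 - (8-c)/9 = c/9 := by ring
  rw [e3] at hb3; rw [e4] at hb4; rw [e6] at hb6
  have hfin : (1:ℝ)*((1/2:ℝ)^i/9) + 1*((1/2:ℝ)^i/9) + 1*((1-t)/9) + 1*((1-t)/9)
      + c*(7/9-5/9) + 1*(c/9) ≤ 3*(1/2:ℝ)^i + 2*(1-t) + 3*c := by nlinarith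
  linarith [htri, hb1, hb2, hb3, hb4, hb5, hb6]

lemma norm_Fs_sub_Fs {i : ℕ} (hi : 1 ≤ i) {t t' : ℝ} (h0 : 0 < t) (h1 : blkL i ≤ t)
    (h2 : t < blkR i) (h0' : 0 < t') (h1' : blkL i ≤ t') (h2' : t' < blkR i) (hle : t ≤ t') :
    ‖Fs i t' - Fs i t‖ ≤ (2 + (2:ℝ)^i) * (t' - t) := by
  have hpow := half_pow_pos i
  have htwo := two_pow_pos i
  have ht1 : t < 1 := lt_trans h2 (blkR_lt_one i)
  have ht1' : t' < 1 := lt_trans h2' (blkR_lt_one i)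
  have hc0 : 0 ≤ cpar i t := cpar_nonneg (le_of_lt h2)
  have hc0' : 0 ≤ cpar i t' := cpar_nonneg (le_of_lt h2')
  have hc1 : cpar i t ≤ 1 := cpar_le_one h1
  have hc1' : cpar i t' ≤ 1 := cpar_le_one h1'
  have hcc : cpar i t - cpar i t' = (t'-t)*2^i := by unfold cpar; ring
  have hccnn : 0 ≤ cpar i t - cpar i t' := by rw [hcc]; nlinarith
  set c := cpar i t with hcdef
  set c' := cpar i t' with hcdef'
  set g3 : ℝ → ℝ := fun y => Set.indicator (Icc (3/9) ((4-t')/9)) (fun _ => (1:ℝ)) y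
    - Set.indicator (Icc (3/9) ((4-t)/9)) (fun _ => (1:ℝ)) y with hg3
  set g4 : ℝ → ℝ := fun y => Set.indicator (Icc (4/9) ((4+t')/9)) (fun _ => (1:ℝ)) y
    - Set.indicator (Icc (4/9) ((4+t)/9)) (fun _ => (1:ℝ)) y with hg4
  set g5 : ℝ → ℝ := fun y => (c' - c) * Set.indicator (rad i) (fun _ => (1:ℝ)) y with hg5
  set g6 : ℝ → ℝ := fun y => Set.indicator (Icc (7/9) ((8-c')/9)) (fun _ => (1:ℝ)) y
    - Set.indicator (Icc (7/9) ((8-c)/9)) (fun _ => (1:ℝ)) y with hg6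
  have hI3 : Integrable g3 μ01 :=
    (integrable_ind measurableSet_Icc).sub (integrable_ind measurableSet_Icc)
  have hI4 : Integrable g4 μ01 :=
    (integrable_ind measurableSet_Icc).sub (integrable_ind measurableSet_Icc)
  have hI5 : Integrable g5 μ01 := (integrable_ind (meas_rad i)).const_mul _
  have hI6 : Integrable g6 μ01 :=
    (integrable_ind measurableSet_Icc).sub (integrable_ind measurableSet_Icc)
  have hkey : Fs i t' - Fs i t = hI3.toL1 g3 + hI4.toL1 g4 + hI5.toL1 g5 + hI6.toL1 g6 := by
    have hs : Fs i t' - Fs i t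
        = ((integrable_phi i t').sub (integrable_phi i t)).toL1
          (fun y => φ i t' y - φ i t y) := rfl
    rw [hs]
    rw [show (hI3.toL1 g3 + hI4.toL1 g4 + hI5.toL1 g5 + hI6.toL1 g6)
        = (((hI3.add hI4).add hI5).add hI6).toL1
          (fun y => g3 y + g4 y + g5 y + g6 y) from rfl]
    apply (Integrable.toL1_eq_toL1_iff _ _ _ _).2
    apply Filter.Eventually.of_forall
    intro y
    simp only [hg3, hg4, hg5, hg6, hcdef, hcdef', φ]
    ring
  rw [hkey]
  have hb3 : ‖hI3.toL1 g3‖ ≤ 1 * ((4-t)/9 - (4-t')/9) := by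
    refine key_bound hI3 (by norm_num) (by linarith) ?_
    intro y; rw [one_mul]
    exact pt3 (by linarith) y
  have hb4 : ‖hI4.toL1 g4‖ ≤ 1 * ((4+t')/9 - (4+t)/9) := by
    refine key_bound hI4 (by norm_num) (by linarith) ?_
    intro y; rw [one_mul, abs_sub_comm]
    exact pt3 (by linarith) y
  have hb5 : ‖hI5.toL1 g5‖ ≤ (c - c') * ((7:ℝ)/9 - 5/9) := by
    refine key_bound hI5 hccnn (by norm_num) ?_
    intro y
    calc |g5 y| = (c - c') * |Set.indicator (rad i) (fun _ => (1:ℝ)) y| := by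
          rw [hg5]; dsimp only
          rw [abs_mul, abs_of_nonpos (by linarith : c' - c ≤ 0)]
          ring_nf
    _ ≤ (c - c') * Set.indicator (Icc (5/9) (7/9)) (fun _ => (1:ℝ)) y := by
          apply mul_le_mul_of_nonneg_left _ hccnn
          exact pt1 (fun z hz => Ico_subset_Icc_self hz.1) y
  have hb6 : ‖hI6.toL1 g6‖ ≤ 1 * ((8-c')/9 - (8-c)/9) := by
    refine key_bound hI6 (by norm_num) (by linarith) ?_
    intro y; rw [one_mul, abs_sub_comm]
    exact pt3 (by linarith) y
  have htri : ‖hI3.toL1 g3 + hI4.toL1 g4 + hI5.toL1 g5 + hI6.toL1 g6‖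
      ≤ ‖hI3.toL1 g3‖ + ‖hI4.toL1 g4‖ + ‖hI5.toL1 g5‖ + ‖hI6.toL1 g6‖ := by
    refine le_trans (norm_add_le _ _) (add_le_add_left ?_ _)
    refine le_trans (norm_add_le _ _) (add_le_add_left ?_ _)
    exact norm_add_le _ _
  have hfin : (1:ℝ)*((4-t)/9 - (4-t')/9) + 1*((4+t')/9 - (4+t)/9)
      + (c - c')*((7:ℝ)/9 - 5/9) + 1*((8-c')/9 - (8-c)/9)
      ≤ (2 + (2:ℝ)^i) * (t' - t) := by
    have h5 : c - c' = (t'-t)*2^i := by rw [hcdef, hcdef']; exact hcc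
    rw [h5]
    nlinarith
  linarith [htri, hb3, hb4, hb5, hb6]

end RadProof
end Rad4
noncomputable section Rad5
namespace RadProof
open MeasureTheory Set
open scoped ENNReal
set_option maxHeartbeats 1000000

lemma Fs_ae {i : ℕ} (hi : 1 ≤ i) {t : ℝ} (h0 : 0 < t) (h1 : blkL i ≤ t) (h2 : t < blkR i) :
    ∀ᵐ y ∂μ01, (Fs i t) y = WR ((1+t)/9) y := by
  have ha : ∀ᵐ y ∂μ01, ((integrable_phi i t).toL1 (φ i t)) y = φ i t y :=
    (integrable_phi i t).coeFn_toL1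
  have hb : ∀ᵐ y ∂μ01, y ∈ Icc (0:ℝ) 1 := by
    unfold μ01; exact ae_restrict_mem measurableSet_Icc
  filter_upwards [ha, hb] with y hy1 hy2
  exact hy1.trans (phi_eq_WR hi h0 h1 h2 y hy2)

lemma mem_T_of (F : Lp ℝ 1 μ01)
    (h : ∀ r : ℝ, 0 < r → ∃ a b : ℝ, a < b ∧ Ioo a b ⊆ Icc 0 1 ∧
      ∀ x ∈ Ioo a b, ∃ G : Lp ℝ 1 μ01, ‖G - F‖ < r ∧ ∀ᵐ y ∂μ01, G y = WR x y) :
    F ∈ Tspace WR := by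
  intro U hU hFU
  obtain ⟨r, hr, hball⟩ := Metric.isOpen_iff.1 hU F hFU
  obtain ⟨a, b, hab, hsub, hx⟩ := h r hr
  have hsubset : Ioo a b ⊆ {x | x ∈ Icc (0:ℝ) 1 ∧
      ∃ g ∈ U, ∀ᵐ y ∂μ01, g y = WR x y} := by
    intro x hxI
    obtain ⟨G, hGr, hGae⟩ := hx x hxI
    exact ⟨hsub hxI, G, hball (by rw [Metric.mem_ball, dist_eq_norm]; exact hGr), hGae⟩
  calc (0:ℝ≥0∞) < volume (Ioo a b) := by
        rw [Real.volume_Ioo]; exact ENNReal.ofReal_pos.2 (by linarith)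
  _ ≤ _ := measure_mono hsubset

lemma Fs_mem_T {i : ℕ} (hi : 1 ≤ i) {t : ℝ} (h0 : 0 < t) (h1 : blkL i ≤ t)
    (h2 : t < blkR i) : Fs i t ∈ Tspace WR := by
  apply mem_T_of
  intro r hr
  have hL : (0:ℝ) < 2 + (2:ℝ)^i := by positivity
  obtain ⟨tm, htm⟩ : ∃ tm : ℝ, tm = min (t + r/(2 + (2:ℝ)^i)) (blkR i) := ⟨_, rfl⟩
  have hdp : 0 < r/(2 + (2:ℝ)^i) := div_pos hr hL
  have htm1 : t < tm := by rw [htm]; exact lt_min (by linarith) h2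
  have htm2 : tm ≤ blkR i := by rw [htm]; exact min_le_right _ _
  have hbr1 := blkR_lt_one i
  refine ⟨(1+t)/9, (1+tm)/9, by linarith, ?_, ?_⟩
  · intro z hz
    exact ⟨by linarith [hz.1], by linarith [hz.2]⟩
  · intro z hz
    obtain ⟨hz1, hz2⟩ := hz
    set t' := 9*z - 1 with ht'
    have hzt : z = (1+t')/9 := by rw [ht']; ring
    have htt1 : t < t' := by rw [ht']; linarith
    have htt2 : t' < tm := by rw [ht']; linarith
    have h0' : 0 < t' := lt_trans h0 htt1
    have h1' : blkL i ≤ t' := le_trans h1 (le_of_lt htt1)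
    have h2' : t' < blkR i := lt_of_lt_of_le htt2 htm2
    refine ⟨Fs i t', ?_, by rw [hzt]; exact Fs_ae hi h0' h1' h2'⟩
    have hb := norm_Fs_sub_Fs hi h0 h1 h2 h0' h1' h2' (le_of_lt htt1)
    have hlt : t' - t < r/(2 + (2:ℝ)^i) := by
      rw [htm] at htt2
      have := lt_of_lt_of_le htt2 (min_le_left _ _)
      linarith
    calc ‖Fs i t' - Fs i t‖ ≤ (2 + (2:ℝ)^i) * (t' - t) := hb
    _ < (2 + (2:ℝ)^i) * (r/(2 + (2:ℝ)^i)) := by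
        exact mul_lt_mul_of_pos_left hlt hL
    _ = r := by field_simp

lemma gee_mem_T : gee ∈ Tspace WR := by
  apply mem_T_of
  intro r hr
  obtain ⟨n, hn⟩ := exists_pow_lt_of_lt_one (show (0:ℝ) < r/15 by linarith)
    (show (1/2:ℝ) < 1 by norm_num)
  set i := n + 1 with hidef
  have hi : 1 ≤ i := by omega
  have hpi : (1/2:ℝ)^i < r/15 :=
    lt_of_le_of_lt (pow_le_pow_of_le_one (by norm_num) (by norm_num) (by omega)) hn
  obtain ⟨ε, hεdef⟩ : ∃ e : ℝ, e = min (r/7) 1 := ⟨_, rfl⟩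
  have hε0 : 0 < ε := by rw [hεdef]; exact lt_min (by linarith) one_pos
  have hε1 : ε ≤ 1 := by rw [hεdef]; exact min_le_right _ _
  have hεr : ε ≤ r/7 := by rw [hεdef]; exact min_le_left _ _
  obtain ⟨tl, htl⟩ : ∃ w : ℝ, w = 1 - (1+ε)*(1/2:ℝ)^i := ⟨_, rfl⟩
  have hpow := half_pow_pos i
  have htlL : blkL i ≤ tl := by unfold blkL; rw [htl]; nlinarith
  have htlR : tl < blkR i := by unfold blkR; rw [htl]; nlinarith
  have htl0 : 0 ≤ tl := le_trans (blkL_nonneg hi) htlL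
  have hbr1 := blkR_lt_one i
  refine ⟨(1+tl)/9, (1+blkR i)/9, by linarith, ?_, ?_⟩
  · intro z hz
    exact ⟨by linarith [hz.1], by linarith [hz.2]⟩
  · intro z hz
    obtain ⟨hz1, hz2⟩ := hz
    set t' := 9*z - 1 with ht'
    have hzt : z = (1+t')/9 := by rw [ht']; ring
    have htt1 : tl < t' := by rw [ht']; linarith
    have htt2 : t' < blkR i := by rw [ht']; linarith
    have h0' : 0 < t' := lt_of_le_of_lt htl0 htt1
    have h1' : blkL i ≤ t' := le_trans htlL (le_of_lt htt1)
    refine ⟨Fs i t', ?_, by rw [hzt]; exact Fs_ae hi h0' h1' htt2⟩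
    have hbd := norm_Fs_sub_gee hi h0' h1' htt2
    have hc' : cpar i t' < ε := by
      unfold cpar
      rw [htl] at htt1
      nlinarith [two_pow_pos i, half_mul_two i]
    have h1t' : 1 - t' < (1+ε)*(1/2:ℝ)^i := by
      rw [htl] at htt1; linarith
    have hc0' : 0 ≤ cpar i t' := cpar_nonneg (le_of_lt htt2)
    calc ‖Fs i t' - gee‖ ≤ 3*(1/2:ℝ)^i + 2*(1-t') + 3*(cpar i t') := hbd
    _ < 3*(1/2:ℝ)^i + 2*((1+ε)*(1/2:ℝ)^i) + 3*ε := by linarith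
    _ ≤ 7*(1/2:ℝ)^i + 3*ε := by nlinarith
    _ < r := by linarith

end RadProof
end Rad5
noncomputable section Rad6
namespace RadProof
open MeasureTheory Set
open scoped ENNReal
set_option maxHeartbeats 1000000

lemma card_filter_parity (j d : ℕ) (hj : 1 ≤ j) (hd : 1 ≤ d) :
    ((Finset.range (2^j)).filter (fun m => (Even m ↔ ¬ Even (m / 2^d)))).card = 2^(j-1) := by
  classical
  set P : ℕ → Prop := fun m => (Even m ↔ ¬ Even (m / 2^d)) with hP
  set σ : ℕ → ℕ := fun m => if Even m then m + 1 else m - 1 with hσ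
  have hσeven : ∀ m : ℕ, Even m → σ m = m + 1 := fun m he => by rw [hσ]; simp [he]
  have hσodd : ∀ m : ℕ, ¬ Even m → σ m = m - 1 := fun m he => by rw [hσ]; simp [he]
  have hpos : ∀ m : ℕ, ¬ Even m → 1 ≤ m := by
    intro m he
    rcases m with _ | m
    · exact absurd Even.zero he
    · omega
  have hdiv : ∀ m : ℕ, σ m / 2^d = m / 2^d := by
    intro m
    by_cases he : Even m
    · rw [hσeven m he, Nat.succ_div, if_neg ?_, add_zero]
      intro hdvd
      have h2 : (2:ℕ) ∣ m + 1 := dvd_trans (dvd_pow_self 2 (by omega : d ≠ 0)) hdvd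
      obtain ⟨k, hk⟩ := he
      omega
    · have h1 := hpos m he
      rw [hσodd m he]
      have hnd : ¬ (2^d ∣ m) := fun hdvd =>
        he (even_iff_two_dvd.2 (dvd_trans (dvd_pow_self 2 (by omega : d ≠ 0)) hdvd))
      have hstep : m / 2^d = ((m-1)+1) / 2^d := by rw [show (m-1)+1 = m by omega]
      rw [hstep, Nat.succ_div, if_neg (by rw [show (m-1)+1 = m by omega]; exact hnd), add_zero]
  have hflip : ∀ m : ℕ, Even (σ m) ↔ ¬ Even m := by
    intro m
    by_cases he : Even m
    · rw [hσeven m he, Nat.even_add_one]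
    · have h1 := hpos m he
      rw [hσodd m he, Nat.even_sub h1]
      have : ¬ Even 1 := by decide
      tauto
  have hPflip : ∀ m : ℕ, P (σ m) ↔ ¬ P m := by
    intro m
    simp only [hP]
    rw [hdiv m]
    have h := hflip m
    tauto
  have hrange : ∀ m : ℕ, m < 2^j → σ m < 2^j := by
    intro m hm
    by_cases he : Even m
    · rw [hσeven m he]
      rcases Nat.lt_or_ge (m+1) (2^j) with h | h
      · exact h
      · exfalso
        have hmeq : m + 1 = 2^j := by omega
        have h2 : Even (2^j) := (Nat.even_pow).2 ⟨even_two, by omega⟩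
        rw [← hmeq] at h2
        obtain ⟨k, hk⟩ := h2
        obtain ⟨l, hl⟩ := he
        omega
    · rw [hσodd m he]; omega
  have hinv : ∀ m : ℕ, σ (σ m) = m := by
    intro m
    by_cases he : Even m
    · have hne : ¬ Even (m+1) := by rw [Nat.even_add_one]; exact not_not.2 he
      rw [hσeven m he, hσodd (m+1) hne]
      omega
    · have h1 := hpos m he
      have he' : Even (m-1) := by
        have := hflip m
        rw [hσodd m he] at this
        exact this.2 he
      rw [hσodd m he, hσeven (m-1) he']
      omega
  have hcard : ((Finset.range (2^j)).filter P).card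
      = ((Finset.range (2^j)).filter (fun m => ¬ P m)).card := by
    apply Finset.card_bij' (fun m _ => σ m) (fun m _ => σ m)
    · intro a ha
      rw [Finset.mem_filter, Finset.mem_range] at ha ⊢
      exact ⟨hrange a ha.1, fun h => (hPflip a).1 h ha.2⟩
    · intro a ha
      rw [Finset.mem_filter, Finset.mem_range] at ha ⊢
      exact ⟨hrange a ha.1, (hPflip a).2 ha.2⟩
    · intro a _; exact hinv a
    · intro a _; exact hinv a
  have hsum := Finset.card_filter_add_card_filter_not
    (s := Finset.range (2^j)) (p := P)
  rw [Finset.card_range] at hsum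
  have h2j : 2^j = 2*2^(j-1) := by
    rw [← pow_succ']
    congr 1
    omega
  show ((Finset.range (2^j)).filter P).card = 2^(j-1)
  omega

def DIco (j m : ℕ) : Set ℝ := Ico ((5:ℝ)/9 + 2*m/(9*2^j)) ((5:ℝ)/9 + 2*(m+1)/(9*2^j))
def Dfin (i j : ℕ) : Finset ℕ :=
  (Finset.range (2^j)).filter (fun m => (Even m ↔ ¬ Even (m / 2^(j-i))))
def Dset (i j : ℕ) : Set ℝ := ⋃ m ∈ Dfin i j, DIco j m

lemma DIco_subset_pC {j m : ℕ} (hm : m < 2^j) : DIco j m ⊆ pC := by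
  intro y hy
  obtain ⟨hy1, hy2⟩ := hy
  have h2j := two_pow_pos j
  have hm' : (m:ℝ) + 1 ≤ 2^j := by exact_mod_cast hm
  have hnn : (0:ℝ) ≤ (m:ℝ) := Nat.cast_nonneg m
  have hub : 2*((m:ℝ)+1)/(9*2^j) ≤ 2/9 := by
    rw [div_le_div_iff₀ (by positivity) (by norm_num)]
    nlinarith
  have hlb : (0:ℝ) ≤ 2*(m:ℝ)/(9*2^j) := by positivity
  constructor
  · show (5:ℝ)/9 ≤ y
    linarith
  · show y < 7/9
    have : 2*((m:ℝ)+1)/(9*2^j) = 2*(↑m+1)/(9*2^j) := rfl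
    push_cast at hy2
    linarith

lemma floor_DIco {j k m : ℕ} (hk : k ≤ j) (hm : m < 2^j) {y : ℝ} (hy : y ∈ DIco j m) :
    ⌊(9*y-5)/2 * (2:ℝ)^k⌋ = (m / 2^(j-k) : ℕ) := by
  obtain ⟨hy1, hy2⟩ := hy
  set d := j - k with hd
  have h2kd : (2:ℝ)^j = 2^d * 2^k := by rw [← pow_add]; congr 1; omega
  have h2k := two_pow_pos k
  have h2d := two_pow_pos d
  have h2j := two_pow_pos j
  set q := m / 2^d with hq
  have hq1 : (q:ℝ) * 2^d ≤ m := by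
    exact_mod_cast Nat.div_mul_le_self m (2^d)
  have hq2 : (m:ℝ) + 1 ≤ ((q:ℝ) + 1) * 2^d := by
    have hnat : m + 1 ≤ (q + 1) * 2^d := by
      have h := Nat.div_add_mod m (2^d)
      have hmod := Nat.mod_lt m (show 0 < 2^d by positivity)
      rw [hq]
      nlinarith [h, hmod]
    exact_mod_cast hnat
  have hy1' : 2*(m:ℝ) ≤ (y - 5/9)*(9*2^j) := by
    have h : 2*(m:ℝ)/(9*2^j) ≤ y - 5/9 := by push_cast at hy1 ⊢; linarith
    rw [div_le_iff₀ (by positivity)] at h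
    linarith
  have hy2' : (y - 5/9)*(9*2^j) < 2*((m:ℝ)+1) := by
    have h : y - 5/9 < 2*((m:ℝ)+1)/(9*2^j) := by push_cast at hy2 ⊢; linarith
    rw [lt_div_iff₀ (by positivity)] at h
    linarith
  have e1 : ((9*y-5)/2 * (2:ℝ)^k) * (2:ℝ)^d = (y - 5/9) * (9*2^j) / 2 := by
    rw [h2kd]; ring
  rw [Int.floor_eq_iff]
  constructor
  · push_cast
    have hle : (q:ℝ)*2^d ≤ ((9*y-5)/2 * (2:ℝ)^k) * (2:ℝ)^d := by
      rw [e1]; linarith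
    exact le_of_mul_le_mul_right hle h2d
  · push_cast
    have hlt : ((9*y-5)/2 * (2:ℝ)^k) * (2:ℝ)^d < ((q:ℝ)+1)*2^d := by
      rw [e1]; linarith
    exact lt_of_mul_lt_mul_right hlt (le_of_lt h2d)

lemma meas_Dset (i j : ℕ) : MeasurableSet (Dset i j) :=
  (Dfin i j).measurableSet_biUnion (fun _ _ => measurableSet_Ico)

lemma vol_Dset {i j : ℕ} (hi : 1 ≤ i) (hij : i < j) : μ01 (Dset i j) = ENNReal.ofReal (1/9) := by
  have hsub : Dset i j ⊆ Icc (0:ℝ) 1 := by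
    refine iUnion₂_subset fun m hm => ?_
    intro y hy
    have hmr : m < 2^j := Finset.mem_range.1 (Finset.mem_filter.1 hm).1
    have := DIco_subset_pC hmr hy
    exact ⟨by linarith [this.1], by linarith [this.2]⟩
  have hD := meas_Dset i j
  have h1 : μ01 (Dset i j) = volume (Dset i j) := by
    rw [μ01, Measure.restrict_apply hD, inter_eq_self_of_subset_left hsub]
  rw [h1]
  have hdisj : (↑(Dfin i j) : Set ℕ).PairwiseDisjoint (DIco j) := by
    intro a _ b _ hab
    have h2j := two_pow_pos j
    simp only [Function.onFun]
    unfold DIco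
    rw [Set.Ico_disjoint_Ico]
    rcases Nat.lt_or_ge a b with h | h
    · have hc : (a:ℝ) + 1 ≤ b := by exact_mod_cast h
      refine le_trans (min_le_left _ _) (le_trans ?_ (le_max_right _ _))
      gcongr
    · have hab' : b < a := by omega
      have hc : (b:ℝ) + 1 ≤ a := by exact_mod_cast hab'
      refine le_trans (min_le_right _ _) (le_trans ?_ (le_max_left _ _))
      gcongr
  rw [Dset, measure_biUnion_finset hdisj (fun _ _ => measurableSet_Ico)]
  have hvol : ∀ m ∈ Dfin i j, volume (DIco j m) = ENNReal.ofReal (2/(9*2^j)) := by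
    intro m _
    rw [DIco, Real.volume_Ico]
    congr 1
    push_cast
    ring
  rw [Finset.sum_congr rfl hvol, Finset.sum_const]
  have hcard : (Dfin i j).card = 2^(j-1) :=
    card_filter_parity j (j-i) (by omega) (by omega)
  rw [hcard, nsmul_eq_mul]
  have hc1 : ((2^(j-1) : ℕ) : ℝ≥0∞) = ENNReal.ofReal ((2:ℝ)^(j-1)) := by
    rw [← ENNReal.ofReal_natCast]
    congr 1
    push_cast
    ring
  rw [hc1, ← ENNReal.ofReal_mul (by positivity)]
  congr 1
  have h2 : (2:ℝ)^j = 2^(j-1)*2 := by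
    rw [← pow_succ]
    congr 1
    omega
  have hp := two_pow_pos (j-1)
  rw [h2]
  field_simp

end RadProof
end Rad6
noncomputable section Rad7
namespace RadProof
open MeasureTheory Set
open scoped ENNReal
set_option maxHeartbeats 1000000

lemma phi_on_pC {k : ℕ} {t : ℝ} (h0 : 0 ≤ t) (h1 : t < 1) {y : ℝ} (hy : y ∈ pC) :
    φ k t y = cpar k t * Set.indicator (rad k) (fun _ => (1:ℝ)) y := by
  have hy5 : (5:ℝ)/9 ≤ y := hy.1
  have hy7 : y < 7/9 := hy.2
  have hbr := blkR_lt_one k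
  simp only [φ]
  rw [Set.indicator_of_notMem (by unfold bA; rw [Set.mem_Ico]; push_neg; intro h; linarith),
      Set.indicator_of_notMem (fun hm => by have h2 : y < 2/9 := hm.1.2; linarith),
      Set.indicator_of_notMem (by rw [Set.mem_Icc]; push_neg; intro h; linarith),
      Set.indicator_of_notMem (show y ∉ Icc (4/9) ((4+t)/9) by rw [Set.mem_Icc]; push_neg; intro h; linarith),
      Set.indicator_of_notMem (show y ∉ Icc (7/9) ((8 - cpar k t)/9) by rw [Set.mem_Icc]; push_neg; intro h; linarith),
      Set.indicator_of_notMem (show y ∉ pD by unfold pD; rw [Set.mem_Ico]; push_neg; intro h; linarith)]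
  ring

lemma cpar_eps (k : ℕ) (ε : ℝ) : cpar k (1 - (1+ε)*(1/2:ℝ)^k) = ε := by
  have h := half_mul_two k
  unfold cpar
  linear_combination ε * h

lemma sep_lemma {i j : ℕ} (hi : 1 ≤ i) (hij : i < j) {ε : ℝ} (hε0 : 0 < ε) (hε1 : ε ≤ 1) :
    ε/9 ≤ ‖Fs i (1 - (1+ε)*(1/2:ℝ)^i) - Fs j (1 - (1+ε)*(1/2:ℝ)^j)‖ := by
  have hj1 : 1 ≤ j := by omega
  set ti := 1 - (1+ε)*(1/2:ℝ)^i with hti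
  set tj := 1 - (1+ε)*(1/2:ℝ)^j with htj
  have hpi := half_pow_pos i
  have hpj := half_pow_pos j
  have hpi2 := half_pow_le_half hi
  have hpj2 := half_pow_le_half hj1
  have hti0 : 0 ≤ ti := by rw [hti]; nlinarith
  have hti1 : ti < 1 := by rw [hti]; nlinarith
  have htj0 : 0 ≤ tj := by rw [htj]; nlinarith
  have htj1 : tj < 1 := by rw [htj]; nlinarith
  have hci : cpar i ti = ε := cpar_eps i ε
  have hcj : cpar j tj = ε := cpar_eps j ε
  have hDm := meas_Dset i j
  have hpt : ∀ y, ε * Set.indicator (Dset i j) (fun _ => (1:ℝ)) y ≤ |φ i ti y - φ j tj y| := by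
    intro y
    by_cases hy : y ∈ Dset i j
    · rw [Set.indicator_of_mem hy, mul_one]
      obtain ⟨m, hmf, hyI⟩ : ∃ m ∈ Dfin i j, y ∈ DIco j m := by
        simpa [Dset, Set.mem_iUnion] using hy
      have hmr : m < 2^j := Finset.mem_range.1 (Finset.mem_filter.1 hmf).1
      have hPm : Even m ↔ ¬ Even (m / 2^(j-i)) := (Finset.mem_filter.1 hmf).2
      have hyC : y ∈ pC := DIco_subset_pC hmr hyI
      have hfj : ⌊(9*y-5)/2 * (2:ℝ)^j⌋ = (m : ℤ) := by
        have h := floor_DIco (le_refl j) hmr hyI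
        rwa [Nat.sub_self, pow_zero, Nat.div_one] at h
      have hfi : ⌊(9*y-5)/2 * (2:ℝ)^i⌋ = ((m / 2^(j-i) : ℕ) : ℤ) :=
        floor_DIco (le_of_lt hij) hmr hyI
      rw [phi_on_pC hti0 hti1 hyC, phi_on_pC htj0 htj1 hyC, hci, hcj]
      by_cases hEm : Even m
      · have hri : y ∉ rad i := by
          intro hr
          have h := hr.2
          rw [hfi] at h
          exact (hPm.1 hEm) (by exact_mod_cast h)
        have hrj : y ∈ rad j := ⟨hyC, by rw [hfj]; exact_mod_cast hEm⟩
        rw [Set.indicator_of_notMem hri, Set.indicator_of_mem hrj]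
        rw [mul_zero, mul_one, zero_sub, abs_neg, abs_of_pos hε0]
      · have hq : Even (m / 2^(j-i)) := by
          by_contra hq
          exact hEm (hPm.2 hq)
        have hri : y ∈ rad i := ⟨hyC, by rw [hfi]; exact_mod_cast hq⟩
        have hrj : y ∉ rad j := by
          intro hr
          have h := hr.2
          rw [hfj] at h
          exact hEm (by exact_mod_cast h)
        rw [Set.indicator_of_mem hri, Set.indicator_of_notMem hrj]
        rw [mul_one, mul_zero, sub_zero, abs_of_pos hε0]
    · rw [Set.indicator_of_notMem hy, mul_zero]
      exact abs_nonneg _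
  have hs : Fs i ti - Fs j tj
      = ((integrable_phi i ti).sub (integrable_phi j tj)).toL1
        (fun y => φ i ti y - φ j tj y) := rfl
  rw [hs, MeasureTheory.L1.norm_of_fun_eq_integral_norm]
  have hint1 : Integrable (fun y => ε * Set.indicator (Dset i j) (fun _ => (1:ℝ)) y) μ01 :=
    (integrable_ind hDm).const_mul ε
  have hint2 : Integrable (fun y => ‖φ i ti y - φ j tj y‖) μ01 :=
    ((integrable_phi i ti).sub (integrable_phi j tj)).norm
  calc ε/9 = ∫ y, ε * Set.indicator (Dset i j) (fun _ => (1:ℝ)) y ∂μ01 := by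
        rw [integral_const_mul, integral_ind hDm, vol_Dset hi hij,
          ENNReal.toReal_ofReal (by norm_num)]
        ring
  _ ≤ ∫ y, ‖φ i ti y - φ j tj y‖ ∂μ01 := by
        refine integral_mono hint1 hint2 ?_
        intro y; dsimp only; rw [Real.norm_eq_abs]; exact hpt y

theorem main_thm : ¬ LocallyCompactSpace (Tspace WR) := by
  intro hLC
  haveI := hLC
  set p : ↥(Tspace WR) := ⟨gee, gee_mem_T⟩ with hp
  obtain ⟨K, hKc, hKn⟩ := exists_compact_mem_nhds p
  obtain ⟨r, hr, hball⟩ := Metric.mem_nhds_iff.1 hKn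
  obtain ⟨ε, hεdef⟩ : ∃ e : ℝ, e = min (r/12) (1/2) := ⟨_, rfl⟩
  have hε0 : 0 < ε := by rw [hεdef]; exact lt_min (by linarith) (by norm_num)
  have hε1 : ε ≤ 1/2 := by rw [hεdef]; exact min_le_right _ _
  have hεr : ε ≤ r/12 := by rw [hεdef]; exact min_le_left _ _
  obtain ⟨n, hn⟩ := exists_pow_lt_of_lt_one (show (0:ℝ) < r/15 by linarith)
    (by norm_num : (1/2:ℝ) < 1)
  set q : ℕ → Lp ℝ 1 μ01 := fun k => Fs (n+1+k) (1 - (1+ε)*(1/2:ℝ)^(n+1+k)) with hq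
  have hcond : ∀ k : ℕ, 0 < 1 - (1+ε)*(1/2:ℝ)^(n+1+k)
      ∧ blkL (n+1+k) ≤ 1 - (1+ε)*(1/2:ℝ)^(n+1+k)
      ∧ 1 - (1+ε)*(1/2:ℝ)^(n+1+k) < blkR (n+1+k) := by
    intro k
    have hik : 1 ≤ n+1+k := by omega
    have hp1 := half_pow_pos (n+1+k)
    have hp2 := half_pow_le_half hik
    refine ⟨by nlinarith, ?_, ?_⟩
    · unfold blkL; nlinarith
    · unfold blkR; nlinarith
  have hmem : ∀ k, q k ∈ Tspace WR := fun k => by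
    rw [hq]
    exact Fs_mem_T (by omega) (hcond k).1 (hcond k).2.1 (hcond k).2.2
  have hnear : ∀ k, ‖q k - gee‖ < r := by
    intro k
    have h := norm_Fs_sub_gee (show 1 ≤ n+1+k by omega) (hcond k).1 (hcond k).2.1 (hcond k).2.2
    have hc := cpar_eps (n+1+k) ε
    have hpk : (1/2:ℝ)^(n+1+k) < r/15 :=
      lt_of_le_of_lt (pow_le_pow_of_le_one (by norm_num) (by norm_num) (by omega)) hn
    have hppos := half_pow_pos (n+1+k)
    rw [hq]
    dsimp only
    calc ‖Fs (n+1+k) (1 - (1+ε)*(1/2:ℝ)^(n+1+k)) - gee‖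
        ≤ 3*(1/2:ℝ)^(n+1+k) + 2*(1-(1 - (1+ε)*(1/2:ℝ)^(n+1+k)))
          + 3*(cpar (n+1+k) (1 - (1+ε)*(1/2:ℝ)^(n+1+k))) := h
    _ = 3*(1/2:ℝ)^(n+1+k) + 2*((1+ε)*(1/2:ℝ)^(n+1+k)) + 3*ε := by rw [hc]; ring
    _ ≤ 7*(1/2:ℝ)^(n+1+k) + 3*ε := by nlinarith
    _ < r := by linarith
  have hsep : ∀ k l : ℕ, k ≠ l → ε/9 ≤ ‖q k - q l‖ := by
    intro k l hkl
    rcases Nat.lt_or_ge k l with h | h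
    · rw [hq]
      dsimp only
      exact sep_lemma (by omega) (by omega) hε0 (by linarith)
    · have h' : l < k := by omega
      rw [hq]
      dsimp only
      rw [norm_sub_rev]
      exact sep_lemma (by omega) (by omega) hε0 (by linarith)
  have hqK : ∀ k, (⟨q k, hmem k⟩ : ↥(Tspace WR)) ∈ K := by
    intro k
    apply hball
    rw [Metric.mem_ball, Subtype.dist_eq, dist_eq_norm]
    exact hnear k
  have hTB : TotallyBounded (Subtype.val '' K : Set (Lp ℝ 1 μ01)) :=
    (hKc.image continuous_subtype_val).totallyBounded
  obtain ⟨s, hsfin, hscov⟩ := Metric.totallyBounded_iff.1 hTB (ε/19) (by linarith)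
  have hchoice : ∀ k : ℕ, ∃ c ∈ s, q k ∈ Metric.ball c (ε/19) := by
    intro k
    have hqmem : q k ∈ Subtype.val '' K := ⟨⟨q k, hmem k⟩, hqK k, rfl⟩
    have h := hscov hqmem
    simpa using h
  choose cfun hcs hcball using hchoice
  haveI : Finite ↥s := hsfin.to_subtype
  obtain ⟨k, l, hkl, hceq⟩ : ∃ k l : ℕ, k ≠ l ∧ cfun k = cfun l := by
    obtain ⟨k, l, hkl, hceq⟩ :=
      Finite.exists_ne_map_eq_of_infinite (fun k : ℕ => (⟨cfun k, hcs k⟩ : ↥s))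
    exact ⟨k, l, hkl, congrArg Subtype.val hceq⟩
  have hd : dist (q k) (q l) < ε/9 := by
    have h1 := hcball k
    have h2 := hcball l
    rw [Metric.mem_ball] at h1 h2
    rw [hceq] at h1
    calc dist (q k) (q l) ≤ dist (q k) (cfun l) + dist (cfun l) (q l) := dist_triangle _ _ _
    _ = dist (q k) (cfun l) + dist (q l) (cfun l) := by rw [dist_comm (cfun l)]
    _ < ε/19 + ε/19 := by linarith
    _ < ε/9 := by linarith
  have hs := hsep k l hkl
  rw [← dist_eq_norm] at hs
  linarith

end RadProof
end Rad7

/-- The topological space `T(W_R)` of typical vertices of the Rademacher graphon is not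
locally compact (in particular, it is not compact). -/
theorem TWR_not_locallyCompact : ¬ LocallyCompactSpace (Tspace WR) := by
  exact RadProof.main_thm
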